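/- arXiv:1304.5024 — 8 statements merged into one kernel-verified Lean document; each statement's English description precedes it below -/
import Mathlib

section
/- Let n ≥ 1 and let (i_1, …, i_ℓ) be a composition of n (a list of positive integers with i_1 + … + i_ℓ = n). Then the number of anti-lexicographically ordered partitions (λ_1, …, λ_ℓ) of {1, …, n} with |λ_r| = i_r for every r = 1, …, ℓ equals N_{(i_1,…,i_ℓ)} = C(i_1+…+i_ℓ−1, i_ℓ−1) · C(i_1+…+i_{ℓ−1}−1, i_{ℓ−1}−1) ⋯ C(i_1+i_2−1, i_2−1), where C denotes the binomial coefficient (for ℓ = 1 the product is empty and equals 1). -/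
/-- A list `L = (λ₁, …, λ_ℓ)` of pairwise disjoint nonempty finite subsets of `ℕ`
whose union is `S` is an *anti-lexicographically ordered partition* of `S` if for
every `r` the maximum of `λ₁ ∪ ⋯ ∪ λ_r` belongs to `λ_r`. -/
def IsALOP (S : Finset ℕ) (L : List (Finset ℕ)) : Prop :=
  (∀ B ∈ L, B.Nonempty) ∧ List.Pairwise Disjoint L ∧
    L.foldr (· ∪ ·) ∅ = S ∧
    ∀ r, (hr : r < L.length) → ∃ m ∈ L.get ⟨r, hr⟩,
      ∀ a ∈ (L.take (r + 1)).foldr (· ∪ ·) ∅, a ≤ m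

/-- `Ncoef [i₁, …, i_ℓ] = C(i₁+⋯+i_ℓ−1, i_ℓ−1) ⋯ C(i₁+i₂−1, i₂−1)`,
with the empty product (ℓ ≤ 1) equal to 1. -/
def Ncoef : List ℕ → ℕ
  | [] => 1
  | [_] => 1
  | i :: j :: rest => Nat.choose (i + j - 1) (j - 1) * Ncoef ((i + j) :: rest)
termination_by l => l.length

def mergeL : List (Finset ℕ) → List (Finset ℕ)
  | a :: b :: rest => (a ∪ b) :: rest
  | l => l

lemma mem_subset_foldr {L : List (Finset ℕ)} {B : Finset ℕ} (h : B ∈ L) :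
    B ⊆ L.foldr (· ∪ ·) ∅ := by
  induction L with
  | nil => simp at h
  | cons a l ih =>
    rcases List.mem_cons.1 h with rfl | h
    · exact Finset.subset_union_left
    · exact (ih h).trans Finset.subset_union_right

lemma finite_ALOP (S : Finset ℕ) (c : List ℕ) :
    {L : List (Finset ℕ) | IsALOP S L ∧ L.map Finset.card = c}.Finite := by
  have h := (List.finite_length_eq {B : Finset ℕ // B ∈ S.powerset} c.length).image
    (List.map Subtype.val)
  apply Set.Finite.subset h
  rintro L ⟨⟨hne, hdis, hunion, hmax⟩, hcard⟩
  refine ⟨L.attach.map (fun x => ⟨x.1, Finset.mem_powerset.2 (hunion ▸ mem_subset_foldr x.2)⟩),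
    ?_, ?_⟩
  · simp only [Set.mem_setOf_eq, List.length_map, List.length_attach]
    rw [← hcard, List.length_map]
  · simp

lemma merge_ALOP {S a b : Finset ℕ} {rest : List (Finset ℕ)}
    (h : IsALOP S (a :: b :: rest)) : IsALOP S ((a ∪ b) :: rest) := by
  obtain ⟨hne, hdis, hunion, hmax⟩ := h
  rw [List.pairwise_cons] at hdis
  obtain ⟨hd1, hd2⟩ := hdis
  rw [List.pairwise_cons] at hd2
  obtain ⟨hd2, hd3⟩ := hd2
  refine ⟨?_, ?_, ?_, ?_⟩
  · intro B hB
    rcases List.mem_cons.1 hB with rfl | hB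
    · exact (hne a (by simp)).mono Finset.subset_union_left
    · exact hne B (by simp [hB])
  · rw [List.pairwise_cons]
    refine ⟨fun B hB => Finset.disjoint_union_left.2 ⟨hd1 B (by simp [hB]), hd2 B hB⟩, hd3⟩
  · rw [← hunion]; simp [Finset.union_assoc]
  · intro r hr
    match r with
    | 0 =>
      obtain ⟨m, hm, hb⟩ := hmax 1 (by simp)
      refine ⟨m, by simp; simp at hm; tauto, ?_⟩
      intro x hx
      apply hb
      simp only [List.take, List.foldr] at hx ⊢
      simp [Finset.union_assoc] at hx ⊢
      tauto
    | k + 1 =>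
      have hk : k + 2 < (a :: b :: rest).length := by
        simp at hr ⊢; omega
      obtain ⟨m, hm, hb⟩ := hmax (k + 2) hk
      refine ⟨m, by simpa using hm, ?_⟩
      intro x hx
      apply hb
      simp only [List.take_succ_cons, List.foldr_cons] at hx ⊢
      simp [Finset.union_assoc] at hx ⊢
      tauto

lemma split_ALOP {S μ : Finset ℕ} {rest : List (Finset ℕ)}
    (h : IsALOP S (μ :: rest)) {l2 : Finset ℕ}
    (hl2 : l2 ⊆ μ) (hl1ne : (μ \ l2).Nonempty)
    (hm : ∃ m ∈ l2, ∀ a ∈ μ, a ≤ m) :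
    IsALOP S ((μ \ l2) :: l2 :: rest) := by
  obtain ⟨hne, hdis, hunion, hmax⟩ := h
  rw [List.pairwise_cons] at hdis
  obtain ⟨hd1, hd2⟩ := hdis
  obtain ⟨m0, hm0, hm0b⟩ := hm
  have hl2ne : l2.Nonempty := ⟨m0, hm0⟩
  have hsd : μ \ l2 ∪ l2 = μ := Finset.sdiff_union_of_subset hl2
  refine ⟨?_, ?_, ?_, ?_⟩
  · intro B hB
    rcases List.mem_cons.1 hB with rfl | hB
    · exact hl1ne
    · rcases List.mem_cons.1 hB with rfl | hB
      · exact hl2ne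
      · exact hne B (by simp [hB])
  · rw [List.pairwise_cons, List.pairwise_cons]
    refine ⟨?_, ⟨fun B hB => Finset.disjoint_of_subset_left hl2 (hd1 B hB), hd2⟩⟩
    intro B hB
    rcases List.mem_cons.1 hB with rfl | hB
    · exact Finset.sdiff_disjoint
    · exact Finset.disjoint_of_subset_left Finset.sdiff_subset (hd1 B hB)
  · rw [← hunion]
    simp only [List.foldr_cons]
    rw [← Finset.union_assoc, hsd]
  · intro r hr
    match r with
    | 0 =>
      refine ⟨(μ \ l2).max' hl1ne, Finset.max'_mem _ _, ?_⟩
      intro x hx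
      simp only [List.take, List.foldr, Finset.union_empty] at hx
      exact Finset.le_max' _ _ (by simpa using hx)
    | 1 =>
      refine ⟨m0, by simpa using hm0, ?_⟩
      intro x hx
      apply hm0b
      simp only [List.take, List.foldr, Finset.union_empty] at hx
      rw [← hsd]
      simpa using hx
    | k + 2 =>
      have hk : k + 1 < (μ :: rest).length := by simp at hr ⊢; omega
      obtain ⟨m, hm, hb⟩ := hmax (k + 1) hk
      refine ⟨m, by simpa using hm, ?_⟩
      intro x hx
      apply hb
      simp only [List.take_succ_cons, List.foldr_cons] at hx ⊢
      rw [← Finset.union_assoc, hsd] at hx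
      exact hx

lemma fiber_char {S μ l1 l2 : Finset ℕ} {rest : List (Finset ℕ)}
    (h : IsALOP S (l1 :: l2 :: rest)) (hμ : l1 ∪ l2 = μ) :
    l2 ⊆ μ ∧ l1 = μ \ l2 ∧ ∃ m ∈ l2, ∀ a ∈ μ, a ≤ m := by
  obtain ⟨hne, hdis, hunion, hmax⟩ := h
  rw [List.pairwise_cons] at hdis
  have hd12 : Disjoint l1 l2 := hdis.1 l2 (by simp)
  obtain ⟨m, hm, hb⟩ := hmax 1 (by simp)
  simp only [List.get] at hm
  refine ⟨hμ ▸ Finset.subset_union_right, ?_, m, hm, ?_⟩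
  · rw [← hμ, Finset.union_sdiff_cancel_right hd12]
  · intro a ha
    apply hb
    rw [← hμ] at ha
    simp only [List.take, List.foldr, Finset.union_empty]
    simpa using ha

lemma main_count (n : ℕ) (hn : 1 ≤ n) :
    ∀ ℓ (c : List ℕ), c.length ≤ ℓ → (∀ i ∈ c, 0 < i) → c.sum = n →
    {L : List (Finset ℕ) | IsALOP (Finset.Icc 1 n) L ∧ L.map Finset.card = c}.ncard
      = Ncoef c := by
  intro ℓ
  induction ℓ with
  | zero =>
    intro c hc hpos hsum
    have hcnil : c = [] := List.length_eq_zero_iff.1 (Nat.le_zero.1 hc)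
    subst hcnil; simp at hsum; omega
  | succ ℓ ih =>
    intro c hc hpos hsum
    match c with
    | [] => simp at hsum; omega
    | [i] =>
      obtain rfl : n = i := by simpa using hsum.symm
      have hset : {L : List (Finset ℕ) | IsALOP (Finset.Icc 1 n) L ∧ L.map Finset.card = [n]}
          = {[Finset.Icc 1 n]} := by
        ext L
        simp only [Set.mem_setOf_eq, Set.mem_singleton_iff]
        constructor
        · rintro ⟨⟨hne, hdis, hunion, hmax⟩, hcard⟩
          match L with
          | [] => simp at hcard
          | B :: x :: r => simp at hcard
          | [B] =>
            simp only [List.foldr, Finset.union_empty] at hunion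
            rw [hunion]
        · rintro rfl
          refine ⟨⟨?_, ?_, ?_, ?_⟩, ?_⟩
          · intro B hB
            simp only [List.mem_singleton] at hB
            subst hB
            exact ⟨1, by simp [hn]⟩
          · simp
          · simp
          · intro r hr
            simp only [List.length_singleton] at hr
            interval_cases r
            refine ⟨n, by simp [hn], ?_⟩
            intro a ha
            simp only [List.take, List.foldr, Finset.union_empty, Finset.mem_Icc] at ha
            omega
          · simp [hn]
      rw [hset, Set.ncard_singleton]
      simp [Ncoef]
    | i :: j :: rest =>
      have hipos : 0 < i := hpos i (by simp)
      have hjpos : 0 < j := hpos j (by simp)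
      have hA := finite_ALOP (Finset.Icc 1 n) (i :: j :: rest)
      have hB := finite_ALOP (Finset.Icc 1 n) ((i + j) :: rest)
      have hmapsto : ∀ L ∈ hA.toFinset, mergeL L ∈ hB.toFinset := by
        intro L hL
        rw [Set.Finite.mem_toFinset] at hL ⊢
        obtain ⟨halop, hcard⟩ := hL
        match L with
        | [] => simp at hcard
        | [x] => simp at hcard
        | l1 :: l2 :: r =>
          simp only [List.map_cons, List.cons.injEq] at hcard
          obtain ⟨hc1, hc2, hc3⟩ := hcard
          have hd12 : Disjoint l1 l2 := by
            have hh := halop.2.1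
            rw [List.pairwise_cons] at hh
            exact hh.1 l2 (by simp)
          refine ⟨merge_ALOP halop, ?_⟩
          simp only [mergeL, List.map_cons, List.cons.injEq]
          exact ⟨by rw [Finset.card_union_of_disjoint hd12, hc1, hc2], hc3⟩
      rw [Set.ncard_eq_toFinset_card _ hA,
        Finset.card_eq_sum_card_fiberwise hmapsto]
      have hfib : ∀ M ∈ hB.toFinset,
          (hA.toFinset.filter (fun L => mergeL L = M)).card = (i + j - 1).choose (j - 1) := by
        intro M hM
        rw [Set.Finite.mem_toFinset] at hM
        obtain ⟨halopM, hcardM⟩ := hM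
        match M with
        | [] => simp at hcardM
        | μ :: rest' =>
          simp only [List.map_cons, List.cons.injEq] at hcardM
          obtain ⟨hcμ, hcr⟩ := hcardM
          have hμne : μ.Nonempty := halopM.1 μ (by simp)
          set m0 := μ.max' hμne with hm0def
          have hm0μ : m0 ∈ μ := Finset.max'_mem _ _
          have hbij : ((μ.erase m0).powersetCard (j - 1)).card
              = (hA.toFinset.filter (fun L => mergeL L = μ :: rest')).card := by
            apply Finset.card_bij
              (fun T _ => (μ \ insert m0 T) :: insert m0 T :: rest')
            · intro T hT
              rw [Finset.mem_powersetCard] at hT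
              obtain ⟨hTsub, hTcard⟩ := hT
              have hm0T : m0 ∉ T := fun h => (Finset.mem_erase.1 (hTsub h)).1 rfl
              have hl2sub : insert m0 T ⊆ μ :=
                Finset.insert_subset hm0μ (hTsub.trans (Finset.erase_subset _ _))
              have hl2card : (insert m0 T).card = j := by
                rw [Finset.card_insert_of_notMem hm0T, hTcard]; omega
              have hl1card : (μ \ insert m0 T).card = i := by
                rw [Finset.card_sdiff_of_subset hl2sub, hcμ, hl2card]; omega
              rw [Finset.mem_filter, Set.Finite.mem_toFinset]
              refine ⟨⟨split_ALOP halopM hl2sub ?_ ⟨m0, Finset.mem_insert_self _ _,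
                fun a ha => Finset.le_max' μ a ha⟩, ?_⟩, ?_⟩
              · rw [← Finset.card_pos, hl1card]; exact hipos
              · simp only [List.map_cons, List.cons.injEq]
                exact ⟨hl1card, hl2card, hcr⟩
              · simp only [mergeL, List.cons.injEq]
                exact ⟨Finset.sdiff_union_of_subset hl2sub, trivial⟩
            · intro T1 h1 T2 h2 heq
              rw [Finset.mem_powersetCard] at h1 h2
              have hm0T1 : m0 ∉ T1 := fun h => (Finset.mem_erase.1 (h1.1 h)).1 rfl
              have hm0T2 : m0 ∉ T2 := fun h => (Finset.mem_erase.1 (h2.1 h)).1 rfl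
              simp only [List.cons.injEq] at heq
              have := heq.2.1
              rw [← Finset.erase_insert hm0T1, ← Finset.erase_insert hm0T2, this]
            · intro L hL
              rw [Finset.mem_filter, Set.Finite.mem_toFinset] at hL
              obtain ⟨⟨halop, hcard⟩, hmerge⟩ := hL
              match L with
              | [] => simp at hcard
              | [x] => simp at hcard
              | l1 :: l2 :: r =>
                simp only [List.map_cons, List.cons.injEq] at hcard
                obtain ⟨hc1, hc2, hc3⟩ := hcard
                simp only [mergeL, List.cons.injEq] at hmerge
                obtain ⟨hu, hrr⟩ := hmerge
                obtain ⟨hl2μ, hl1eq, m, hm, hb⟩ := fiber_char halop hu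
                have hmm0 : m = m0 :=
                  le_antisymm (Finset.le_max' μ m (hl2μ hm)) (hb m0 hm0μ)
                subst hmm0
                have hm0l2 : m0 ∈ l2 := hm
                refine ⟨l2.erase m0, ?_, ?_⟩
                · rw [Finset.mem_powersetCard]
                  exact ⟨Finset.erase_subset_erase m0 hl2μ,
                    by rw [Finset.card_erase_of_mem hm0l2, hc2]⟩
                · rw [Finset.insert_erase hm0l2]
                  rw [← hl1eq, hrr]
          rw [← hbij, Finset.card_powersetCard, Finset.card_erase_of_mem hm0μ, hcμ]
      rw [Finset.sum_congr rfl hfib, Finset.sum_const, smul_eq_mul]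
      have hIH := ih ((i + j) :: rest) (by simp at hc ⊢; omega)
        (by
          intro x hx
          rcases List.mem_cons.1 hx with rfl | hx
          · omega
          · exact hpos x (by simp [hx]))
        (by simp only [List.sum_cons] at hsum ⊢; omega)
      rw [Set.ncard_eq_toFinset_card _ hB] at hIH
      rw [hIH]
      rw [show Ncoef (i :: j :: rest) = (i + j - 1).choose (j - 1) * Ncoef ((i + j) :: rest)
        from by rw [Ncoef]]
      ring

/-- for a composition `(i₁, …, i_ℓ)` of `n ≥ 1`, the number of
anti-lexicographically ordered partitions `(λ₁, …, λ_ℓ)` of `{1, …, n}` with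
`|λ_r| = i_r` for all `r` is `N_{(i₁, …, i_ℓ)}`. -/
theorem stmt0 (n : ℕ) (hn : 1 ≤ n) (c : List ℕ)
    (hpos : ∀ i ∈ c, 0 < i) (hsum : c.sum = n) :
    {L : List (Finset ℕ) | IsALOP (Finset.Icc 1 n) L ∧ L.map Finset.card = c}.ncard
      = Ncoef c := by
  exact main_count n hn c.length c le_rfl hpos hsum
end

section
/- Let n ≥ 1. For λ = (λ_1, …, λ_ℓ) ∈ P_n and 0 ≤ m ≤ ℓ, let λ⁺ be the list obtained from λ by replacing every element j of every block by j + 1, and define λ^[m] as follows: for 1 ≤ m ≤ ℓ, λ^[m] is λ⁺ with the element 1 inserted into its m-th block; λ^[0] is λ⁺ with the singleton block {1} prepended. Then: (a) every λ^[m] is an anti-lexicographically ordered partition of {1, …, n+1}; and (b) the map (λ, m) ↦ λ^[m] is a bijection from the set of pairs {(λ, m) : λ ∈ P_n, 0 ≤ m ≤ length(λ)} onto P_{n+1}. -/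
/-- `shiftUp L = L⁺` : increase every element of every block of `L` by 1. -/
def shiftUp (L : List (Finset ℕ)) : List (Finset ℕ) :=
  L.map (Finset.image (· + 1))

/-- The derived partition `λ^[m]`: for `m = 0`, prepend the singleton block `{1}` to `λ⁺`;
for `1 ≤ m`, insert the element `1` into the `m`-th block of `λ⁺`. -/
def derive (L : List (Finset ℕ)) (m : ℕ) : List (Finset ℕ) :=
  if m = 0 then {1} :: shiftUp L
  else (shiftUp L).set (m - 1) (insert 1 ((shiftUp L).getD (m - 1) ∅))

def shiftDown (M : List (Finset ℕ)) : List (Finset ℕ) := M.map (Finset.image (· - 1))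

lemma mem_U {L : List (Finset ℕ)} {a : ℕ} : a ∈ L.foldr (· ∪ ·) ∅ ↔ ∃ B ∈ L, a ∈ B := by
  induction L with
  | nil => simp
  | cons B T ih => simp [ih]

lemma mem_U' {L : List (Finset ℕ)} {a : ℕ} :
    a ∈ L.foldr (· ∪ ·) ∅ ↔ ∃ i, ∃ h : i < L.length, a ∈ L[i] := by
  rw [mem_U]
  constructor
  · rintro ⟨B, hB, ha⟩
    obtain ⟨i, h, rfl⟩ := List.mem_iff_getElem.1 hB
    exact ⟨i, h, ha⟩
  · rintro ⟨i, h, ha⟩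
    exact ⟨_, List.getElem_mem _, ha⟩

lemma mem_take_U {L : List (Finset ℕ)} {k a : ℕ} :
    a ∈ (L.take k).foldr (· ∪ ·) ∅ ↔ ∃ i, ∃ h : i < L.length, i < k ∧ a ∈ L[i] := by
  rw [mem_U']
  constructor
  · rintro ⟨i, h, ha⟩
    have h' := h
    rw [List.length_take] at h'
    exact ⟨i, lt_of_lt_of_le h' (min_le_right _ _), lt_of_lt_of_le h' (min_le_left _ _),
      by rwa [List.getElem_take] at ha⟩
  · rintro ⟨i, h, hk, ha⟩
    refine ⟨i, by simp [List.length_take]; omega, ?_⟩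
    rwa [List.getElem_take]

lemma isALOP_iff {S : Finset ℕ} {L : List (Finset ℕ)} : IsALOP S L ↔
    (∀ B ∈ L, B.Nonempty) ∧ List.Pairwise Disjoint L ∧
    L.foldr (· ∪ ·) ∅ = S ∧ ∀ r, (hr : r < L.length) → ∃ m ∈ L[r],
      ∀ i, (hi : i < L.length) → i ≤ r → ∀ a ∈ L[i], a ≤ m := by
  unfold IsALOP
  refine and_congr_right fun _ => and_congr_right fun _ => and_congr_right fun _ => ?_
  refine forall_congr' fun r => forall_congr' fun hr => ?_
  simp only [List.get_eq_getElem]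
  refine exists_congr fun m => and_congr_right fun _ => ?_
  constructor
  · intro h i hi hir a ha
    exact h a (mem_take_U.2 ⟨i, hi, Nat.lt_succ_of_le hir, ha⟩)
  · intro h a ha
    obtain ⟨i, hi, hik, ha⟩ := mem_take_U.1 ha
    exact h i hi (Nat.lt_succ_iff.1 hik) a ha

lemma length_shiftUp (L : List (Finset ℕ)) : (shiftUp L).length = L.length := by
  simp [shiftUp]

lemma getElem_shiftUp (L : List (Finset ℕ)) {i : ℕ} (h : i < (shiftUp L).length) :
    (shiftUp L)[i] = (L[i]'(by simpa [length_shiftUp] using h)).image (· + 1) := by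
  simp [shiftUp]

lemma shiftDown_shiftUp (L : List (Finset ℕ)) : shiftDown (shiftUp L) = L := by
  unfold shiftDown shiftUp
  rw [List.map_map]
  have : (Finset.image (· - 1) ∘ Finset.image (· + 1) : Finset ℕ → Finset ℕ) = id := by
    funext B
    simp only [Function.comp_apply, Finset.image_image, id_eq]
    ext x
    simp
  simp [this]

lemma shiftUp_shiftDown {M : List (Finset ℕ)} (h : ∀ B ∈ M, ∀ x ∈ B, 1 ≤ x) :
    shiftUp (shiftDown M) = M := by
  unfold shiftDown shiftUp
  rw [List.map_map]
  induction M with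
  | nil => rfl
  | cons B T ih =>
    simp only [List.map_cons, List.cons.injEq]
    constructor
    · ext x
      simp only [Function.comp_apply, Finset.mem_image, Finset.image_image]
      constructor
      · rintro ⟨y, hy, rfl⟩
        have := h B (by simp) y hy
        simpa [Nat.sub_add_cancel this] using hy
      · intro hx
        exact ⟨x, hx, by have := h B (by simp) x hx; omega⟩
    · exact ih fun B hB => h B (by simp [hB])

lemma shiftUp_injective : Function.Injective shiftUp := by
  intro L L' h
  have := congrArg shiftDown h
  rwa [shiftDown_shiftUp, shiftDown_shiftUp] at this

lemma U_shiftUp (L : List (Finset ℕ)) :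
    (shiftUp L).foldr (· ∪ ·) ∅ = (L.foldr (· ∪ ·) ∅).image (· + 1) := by
  induction L with
  | nil => simp [shiftUp]
  | cons B T ih => simp [shiftUp, Finset.image_union] at ih ⊢; rw [ih]

lemma image_Icc (a b : ℕ) : (Finset.Icc a b).image (· + 1) = Finset.Icc (a + 1) (b + 1) := by
  ext x
  simp only [Finset.mem_image, Finset.mem_Icc]
  constructor
  · rintro ⟨y, hy, rfl⟩; omega
  · intro hx; exact ⟨x - 1, by omega, by omega⟩

lemma isALOP_shiftUp_iff {S : Finset ℕ} {L : List (Finset ℕ)} :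
    IsALOP (S.image (· + 1)) (shiftUp L) ↔ IsALOP S L := by
  have inj : Function.Injective (· + 1 : ℕ → ℕ) := fun a b h => by simpa using h
  rw [isALOP_iff, isALOP_iff]
  constructor
  · rintro ⟨h1, h2, h3, h4⟩
    refine ⟨?_, ?_, ?_, ?_⟩
    · intro B hB
      have := h1 (B.image (· + 1)) (List.mem_map_of_mem (f := Finset.image (· + 1)) hB)
      rwa [Finset.image_nonempty] at this
    · rw [shiftUp, List.pairwise_map] at h2
      exact h2.imp fun h => (Finset.disjoint_image inj).1 h
    · rw [U_shiftUp] at h3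
      exact Finset.image_injective inj h3
    · intro r hr
      have hr' : r < (shiftUp L).length := by rwa [length_shiftUp]
      obtain ⟨m, hm, hcond⟩ := h4 r hr'
      rw [getElem_shiftUp] at hm
      obtain ⟨m', hm', rfl⟩ := Finset.mem_image.1 hm
      refine ⟨m', hm', fun i hi hir a ha => ?_⟩
      have hi' : i < (shiftUp L).length := by rwa [length_shiftUp]
      have := hcond i hi' hir (a + 1) (by rw [getElem_shiftUp]; exact Finset.mem_image_of_mem _ ha)
      omega
  · rintro ⟨h1, h2, h3, h4⟩
    refine ⟨?_, ?_, ?_, ?_⟩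
    · intro B hB
      obtain ⟨B', hB', rfl⟩ := List.mem_map.1 hB
      rw [Finset.image_nonempty]
      exact h1 B' hB'
    · rw [shiftUp, List.pairwise_map]
      exact h2.imp fun h => (Finset.disjoint_image inj).2 h
    · rw [U_shiftUp, h3]
    · intro r hr
      have hr' : r < L.length := by rwa [length_shiftUp] at hr
      obtain ⟨m, hm, hcond⟩ := h4 r hr'
      refine ⟨m + 1, by rw [getElem_shiftUp]; exact Finset.mem_image_of_mem _ hm, ?_⟩
      intro i hi hir a ha
      rw [getElem_shiftUp] at ha
      obtain ⟨a', ha', rfl⟩ := Finset.mem_image.1 ha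
      have := hcond i (by rwa [length_shiftUp] at hi) hir a' ha'
      omega

lemma list_set_getElem_self {l : List (Finset ℕ)} {i : ℕ} (h : i < l.length) :
    l.set i l[i] = l := by
  apply List.ext_getElem (by simp)
  intro n h1 h2
  rw [List.getElem_set]
  split <;> simp_all

lemma block_subset {S : Finset ℕ} {L : List (Finset ℕ)} (h3 : L.foldr (· ∪ ·) ∅ = S)
    {i : ℕ} (hi : i < L.length) : L[i] ⊆ S := by
  intro a ha
  rw [← h3]
  exact mem_U'.2 ⟨i, hi, ha⟩

lemma pairwise_disjoint_getElem {L : List (Finset ℕ)} (h : List.Pairwise Disjoint L)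
    {k l : ℕ} (hk : k < L.length) (hl : l < L.length) (hne : k ≠ l) : Disjoint L[k] L[l] := by
  rcases Nat.lt_or_ge k l with h' | h'
  · exact List.pairwise_iff_get.1 h ⟨k, hk⟩ ⟨l, hl⟩ h'
  · exact (List.pairwise_iff_get.1 h ⟨l, hl⟩ ⟨k, hk⟩
      (by rw [Fin.mk_lt_mk]; omega)).symm

lemma cons_one_isALOP {k : ℕ} (hk : 1 ≤ k) {M : List (Finset ℕ)}
    (h : IsALOP (Finset.Icc 2 k) M) : IsALOP (Finset.Icc 1 k) ({1} :: M) := by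
  rw [isALOP_iff] at h ⊢
  obtain ⟨h1, h2, h3, h4⟩ := h
  have hblk : ∀ i, (hi : i < M.length) → M[i] ⊆ Finset.Icc 2 k := fun i hi => block_subset h3 hi
  refine ⟨?_, ?_, ?_, ?_⟩
  · intro B hB
    rcases List.mem_cons.1 hB with rfl | hB'
    · exact ⟨1, by simp⟩
    · exact h1 B hB'
  · constructor
    · intro B hB
      rw [Finset.disjoint_left]
      intro a haS haB
      rw [Finset.mem_singleton] at haS
      subst haS
      obtain ⟨i, hi, rfl⟩ := List.mem_iff_getElem.1 hB
      have := hblk i hi haB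
      simp [Finset.mem_Icc] at this
    · exact h2
  · simp only [List.foldr_cons, h3]
    ext x
    simp only [Finset.mem_union, Finset.mem_singleton, Finset.mem_Icc]
    omega
  · intro r hr
    match r with
    | 0 =>
      refine ⟨1, by simp, ?_⟩
      intro i hi hir a ha
      interval_cases i
      simp at ha
      omega
    | r + 1 =>
      have hr' : r < M.length := by simpa using hr
      obtain ⟨m, hm, hcond⟩ := h4 r hr'
      have hm2 : 2 ≤ m := by have := hblk r hr' hm; simp [Finset.mem_Icc] at this; omega
      refine ⟨m, by simpa using hm, ?_⟩
      intro i hi hir a ha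
      match i with
      | 0 => simp at ha; omega
      | i + 1 =>
        have hi' : i < M.length := by simpa using hi
        have ha' : a ∈ M[i] := by simpa using ha
        exact hcond i hi' (by omega) a ha'

lemma insert_one_isALOP {k : ℕ} {M : List (Finset ℕ)} (h : IsALOP (Finset.Icc 2 k) M)
    {j : ℕ} (hj : j < M.length) :
    IsALOP (Finset.Icc 1 k) (M.set j (insert 1 M[j])) := by
  rw [isALOP_iff] at h ⊢
  obtain ⟨h1, h2, h3, h4⟩ := h
  have hblk : ∀ i, (hi : i < M.length) → M[i] ⊆ Finset.Icc 2 k := fun i hi => block_subset h3 hi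
  have hk2 : 2 ≤ k := by
    obtain ⟨x, hx⟩ := h1 M[j] (List.getElem_mem hj)
    have := hblk j hj hx
    simp [Finset.mem_Icc] at this
    omega
  have hlen : (M.set j (insert 1 M[j])).length = M.length := by simp
  have hget : ∀ i, (hi : i < M.length) →
      (M.set j (insert 1 M[j]))[i]'(by omega) = if j = i then insert 1 M[j] else M[i] := by
    intro i hi
    rw [List.getElem_set]
  refine ⟨?_, ?_, ?_, ?_⟩
  · intro B hB
    obtain ⟨i, hi, rfl⟩ := List.mem_iff_getElem.1 hB
    rw [hlen] at hi
    rw [hget i hi]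
    split
    · exact ⟨1, by simp⟩
    · exact h1 M[i] (List.getElem_mem hi)
  · rw [List.pairwise_iff_get]
    have key : ∀ x y, (hx : x < M.length) → (hy : y < M.length) → x ≠ y →
        Disjoint ((M.set j (insert 1 M[j]))[x]'(by simpa using hx))
          ((M.set j (insert 1 M[j]))[y]'(by simpa using hy)) := by
      intro x y hx hy hne
      have hdisj := pairwise_disjoint_getElem h2 hx hy hne
      have h1y : 1 ∉ M[y] := fun hm => by have := hblk y hy hm; simp [Finset.mem_Icc] at this
      have h1x : 1 ∉ M[x] := fun hm => by have := hblk x hx hm; simp [Finset.mem_Icc] at this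
      rw [hget x hx, hget y hy]
      split <;> split
      · omega
      · rename_i hja hjb
        subst hja
        rw [Finset.disjoint_insert_left]
        exact ⟨h1y, hdisj⟩
      · rename_i hja hjb
        subst hjb
        rw [Finset.disjoint_insert_right]
        exact ⟨h1x, hdisj⟩
      · exact hdisj
    intro a b hab
    simp only [List.get_eq_getElem]
    exact key a b (by have := a.2; simp [hlen] at this; omega)
      (by have := b.2; simp [hlen] at this; omega)
      (by have : (a : ℕ) < (b : ℕ) := hab; omega)
  · ext x
    rw [mem_U']
    simp only [Finset.mem_Icc]
    constructor
    · rintro ⟨i, hi, hx⟩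
      rw [hlen] at hi
      rw [hget i hi] at hx
      have : x = 1 ∨ x ∈ M[i] := by
        split at hx
        · rcases Finset.mem_insert.1 hx with h | h
          · left; exact h
          · right; rename_i hji; subst hji; exact h
        · right; exact hx
      rcases this with rfl | hx'
      · omega
      · have := hblk i hi hx'
        simp [Finset.mem_Icc] at this
        omega
    · intro hx
      rcases eq_or_ne x 1 with rfl | hx1
      · exact ⟨j, by omega, by rw [hget j hj]; simp⟩
      · have : x ∈ M.foldr (· ∪ ·) ∅ := by rw [h3]; simp [Finset.mem_Icc]; omega
        obtain ⟨i, hi, hx'⟩ := mem_U'.1 this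
        refine ⟨i, by omega, ?_⟩
        rw [hget i hi]
        split
        · rename_i hji; subst hji; exact Finset.mem_insert_of_mem hx'
        · exact hx'
  · intro r hr
    rw [hlen] at hr
    obtain ⟨m, hm, hcond⟩ := h4 r hr
    have hm2 : 2 ≤ m := by have := hblk r hr hm; simp [Finset.mem_Icc] at this; omega
    refine ⟨m, ?_, ?_⟩
    · rw [hget r hr]
      split
      · rename_i hjr; subst hjr; exact Finset.mem_insert_of_mem hm
      · exact hm
    · intro i hi hir a ha
      rw [hlen] at hi
      rw [hget i hi] at ha
      have : a = 1 ∨ a ∈ M[i] := by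
        split at ha
        · rcases Finset.mem_insert.1 ha with h | h
          · left; exact h
          · right; rename_i hji; subst hji; exact h
        · right; exact ha
      rcases this with rfl | ha'
      · omega
      · exact hcond i hi hir a ha'

lemma shiftUp_isALOP {n : ℕ} {L : List (Finset ℕ)} (h : IsALOP (Finset.Icc 1 n) L) :
    IsALOP (Finset.Icc 2 (n + 1)) (shiftUp L) := by
  have := isALOP_shiftUp_iff (S := Finset.Icc 1 n) (L := L) |>.2 h
  rwa [image_Icc] at this

lemma part_a {n : ℕ} (hn : 1 ≤ n) {L : List (Finset ℕ)} (h : IsALOP (Finset.Icc 1 n) L)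
    {m : ℕ} (hm : m ≤ L.length) : IsALOP (Finset.Icc 1 (n + 1)) (derive L m) := by
  have hM := shiftUp_isALOP h
  rcases Nat.eq_zero_or_pos m with rfl | hm0
  · rw [derive, if_pos rfl]
    exact cons_one_isALOP (by omega) hM
  · rw [derive, if_neg (by omega)]
    have hj : m - 1 < (shiftUp L).length := by rw [length_shiftUp]; omega
    rw [List.getD_eq_getElem _ _ hj]
    exact insert_one_isALOP hM hj

lemma no_one {n : ℕ} {L : List (Finset ℕ)} (h : IsALOP (Finset.Icc 1 n) L)
    {i : ℕ} (hi : i < (shiftUp L).length) : 1 ∉ (shiftUp L)[i] := by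
  intro hx
  have h3 := ((isALOP_iff).1 (shiftUp_isALOP h)).2.2.1
  have := block_subset h3 hi hx
  simp [Finset.mem_Icc] at this

lemma inj_aux {n : ℕ} {L L' : List (Finset ℕ)} (hL : IsALOP (Finset.Icc 1 n) L)
    (hL' : IsALOP (Finset.Icc 1 n) L') {m m' : ℕ} (hm : m ≤ L.length) (hm' : m' ≤ L'.length)
    (heq : derive L m = derive L' m') : L = L' ∧ m = m' := by
  -- key facts
  have lenM : (shiftUp L).length = L.length := length_shiftUp L
  have lenM' : (shiftUp L').length = L'.length := length_shiftUp L'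
  -- mixed case impossible
  have mixed : ∀ (K K' : List (Finset ℕ)), IsALOP (Finset.Icc 1 n) K →
      IsALOP (Finset.Icc 1 n) K' → ∀ j, j < K'.length →
      derive K 0 ≠ derive K' (j + 1) := by
    intro K K' hK hK' j hj heq
    rw [derive, if_pos rfl, derive, if_neg (by omega)] at heq
    simp only [Nat.add_sub_cancel] at heq
    have hj' : j < (shiftUp K').length := by rwa [length_shiftUp]
    rw [List.getD_eq_getElem _ _ hj'] at heq
    have hlen0 : 0 < ((shiftUp K').set j (insert 1 (shiftUp K')[j])).length := by
      simp; omega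
    have h0 := List.getElem_of_eq heq (i := 0) (by simp)
    rw [List.getElem_cons_zero, List.getElem_set] at h0
    rcases eq_or_ne j 0 with rfl | hj0
    · rw [if_pos rfl] at h0
      obtain ⟨z, hz⟩ := ((isALOP_iff).1 (shiftUp_isALOP hK')).1 _ (List.getElem_mem hj')
      have hz1 : z ∈ ({1} : Finset ℕ) := by rw [h0]; exact Finset.mem_insert_of_mem hz
      rw [Finset.mem_singleton] at hz1
      subst hz1
      exact no_one hK' hj' hz
    · rw [if_neg hj0] at h0
      have : (1 : ℕ) ∈ (shiftUp K')[0]'(by omega) := by rw [← h0]; simp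
      exact no_one hK' _ this
  rcases Nat.eq_zero_or_pos m with rfl | hm0 <;> rcases Nat.eq_zero_or_pos m' with rfl | hm0'
  · rw [derive, if_pos rfl, derive, if_pos rfl] at heq
    have := List.tail_eq_of_cons_eq heq
    exact ⟨shiftUp_injective this, rfl⟩
  · exact absurd heq (by
      obtain ⟨j, rfl⟩ : ∃ j, m' = j + 1 := ⟨m' - 1, by omega⟩
      exact mixed L L' hL hL' j (by omega))
  · exact absurd heq.symm (by
      obtain ⟨j, rfl⟩ : ∃ j, m = j + 1 := ⟨m - 1, by omega⟩
      exact mixed L' L hL' hL j (by omega))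
  · obtain ⟨j, rfl⟩ : ∃ j, m = j + 1 := ⟨m - 1, by omega⟩
    obtain ⟨j', rfl⟩ : ∃ j', m' = j' + 1 := ⟨m' - 1, by omega⟩
    have hj : j < (shiftUp L).length := by omega
    have hj' : j' < (shiftUp L').length := by omega
    rw [derive, if_neg (by omega), derive, if_neg (by omega)] at heq
    simp only [Nat.add_sub_cancel] at heq
    rw [List.getD_eq_getElem _ _ hj, List.getD_eq_getElem _ _ hj'] at heq
    have hlen : (shiftUp L).length = (shiftUp L').length := by
      have := congrArg List.length heq
      simpa using this
    -- j = j'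
    have hjj : j = j' := by
      by_contra hne
      have h1j : (1 : ℕ) ∈ ((shiftUp L).set j (insert 1 (shiftUp L)[j]))[j]'(by simpa using hj) := by
        rw [List.getElem_set, if_pos rfl]
        exact Finset.mem_insert_self _ _
      rw [List.getElem_of_eq heq] at h1j
      rw [List.getElem_set, if_neg (Ne.symm hne)] at h1j
      exact no_one hL' (by omega) h1j
    subst hjj
    have hMeq : shiftUp L = shiftUp L' := by
      apply List.ext_getElem (by omega)
      intro k hk hk'
      have hk2 : k < ((shiftUp L).set j (insert 1 (shiftUp L)[j])).length := by simpa using hk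
      have := List.getElem_of_eq heq (i := k) hk2
      rw [List.getElem_set, List.getElem_set] at this
      rcases eq_or_ne j k with rfl | hne
      · rw [if_pos rfl, if_pos rfl] at this
        have e1 : ((insert 1 (shiftUp L)[j]).erase 1) = (shiftUp L)[j] :=
          Finset.erase_insert (no_one hL hj)
        have e2 : ((insert 1 (shiftUp L')[j]).erase 1) = (shiftUp L')[j] :=
          Finset.erase_insert (no_one hL' hj')
        rw [← e1, ← e2, this]
      · rw [if_neg hne, if_neg hne] at this
        exact this
    exact ⟨shiftUp_injective hMeq, rfl⟩

lemma tail_isALOP {n : ℕ} {T : List (Finset ℕ)}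
    (h : IsALOP (Finset.Icc 1 (n + 1)) ({1} :: T)) : IsALOP (Finset.Icc 2 (n + 1)) T := by
  rw [isALOP_iff] at h ⊢
  obtain ⟨h1, h2, h3, h4⟩ := h
  obtain ⟨hd, h2'⟩ := List.pairwise_cons.1 h2
  have h1T : 1 ∉ T.foldr (· ∪ ·) ∅ := by
    intro hx
    obtain ⟨B, hB, hxB⟩ := mem_U.1 hx
    exact Finset.disjoint_left.1 (hd B hB) (Finset.mem_singleton_self 1) hxB
  refine ⟨fun B hB => h1 B (List.mem_cons_of_mem _ hB), h2', ?_, ?_⟩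
  · simp only [List.foldr_cons] at h3
    ext z
    simp only [Finset.mem_Icc]
    constructor
    · intro hz
      have : z ∈ ({1} : Finset ℕ) ∪ T.foldr (· ∪ ·) ∅ := Finset.mem_union_right _ hz
      rw [h3] at this
      simp only [Finset.mem_Icc] at this
      have : z ≠ 1 := fun he => h1T (he ▸ hz)
      omega
    · intro hz
      have : z ∈ ({1} : Finset ℕ) ∪ T.foldr (· ∪ ·) ∅ := by
        rw [h3]; simp only [Finset.mem_Icc]; omega
      rcases Finset.mem_union.1 this with hz' | hz'
      · rw [Finset.mem_singleton] at hz'; omega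
      · exact hz'
  · intro r hr
    obtain ⟨m, hm, hcond⟩ := h4 (r + 1) (by simp; omega)
    rw [List.getElem_cons_succ] at hm
    refine ⟨m, hm, fun i hi hir a ha => ?_⟩
    exact hcond (i + 1) (by simp; omega) (by omega) a (by simpa using ha)

lemma erase_isALOP {n : ℕ} {L' : List (Finset ℕ)} (h : IsALOP (Finset.Icc 1 (n + 1)) L')
    {i : ℕ} (hi : i < L'.length) (h1i : 1 ∈ L'[i]) {x : ℕ} (hx : x ∈ L'[i]) (hx1 : x ≠ 1) :
    IsALOP (Finset.Icc 2 (n + 1)) (L'.set i (L'[i].erase 1)) := by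
  rw [isALOP_iff] at h ⊢
  obtain ⟨h1, h2, h3, h4⟩ := h
  have hblk : ∀ k, (hk : k < L'.length) → L'[k] ⊆ Finset.Icc 1 (n + 1) :=
    fun k hk => block_subset h3 hk
  have hx2 : 2 ≤ x := by have := hblk i hi hx; simp [Finset.mem_Icc] at this; omega
  have hget : ∀ k, (hk : k < L'.length) →
      (L'.set i (L'[i].erase 1))[k]'(by simpa using hk) =
        if i = k then L'[i].erase 1 else L'[k] := by
    intro k hk
    rw [List.getElem_set]
  have hsub : ∀ k, (hk : k < L'.length) →
      (if i = k then L'[i].erase 1 else L'[k]) ⊆ L'[k] := by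
    intro k hk
    split
    · rename_i hik; subst hik; exact Finset.erase_subset _ _
    · exact subset_rfl
  refine ⟨?_, ?_, ?_, ?_⟩
  · intro B hB
    obtain ⟨k, hk, rfl⟩ := List.mem_iff_getElem.1 hB
    rw [List.length_set] at hk
    rw [hget k hk]
    split
    · exact ⟨x, Finset.mem_erase.2 ⟨hx1, hx⟩⟩
    · exact h1 _ (List.getElem_mem hk)
  · rw [List.pairwise_iff_get]
    have key : ∀ y z, (hy : y < L'.length) → (hz : z < L'.length) → y ≠ z →
        Disjoint ((L'.set i (L'[i].erase 1))[y]'(by simpa using hy))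
          ((L'.set i (L'[i].erase 1))[z]'(by simpa using hz)) := by
      intro y z hy hz hne
      rw [hget y hy, hget z hz]
      exact Finset.disjoint_of_subset_left (hsub y hy) (Finset.disjoint_of_subset_right
        (hsub z hz) (pairwise_disjoint_getElem h2 hy hz hne))
    intro a b hab
    simp only [List.get_eq_getElem]
    exact key a b (by have := a.2; simp at this; omega) (by have := b.2; simp at this; omega)
      (by have : (a : ℕ) < (b : ℕ) := hab; omega)
  · ext z
    rw [mem_U']
    simp only [Finset.mem_Icc]
    constructor
    · rintro ⟨k, hk, hzk⟩
      rw [List.length_set] at hk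
      rw [hget k hk] at hzk
      have hz1 : z ≠ 1 := by
        rcases eq_or_ne i k with rfl | hne
        · rw [if_pos rfl] at hzk
          exact (Finset.mem_erase.1 hzk).1
        · rw [if_neg hne] at hzk
          intro he
          subst he
          exact Finset.disjoint_left.1 (pairwise_disjoint_getElem h2 hi hk hne) h1i hzk
      have := hblk k hk (hsub k hk hzk)
      simp [Finset.mem_Icc] at this
      omega
    · intro hz
      have : z ∈ L'.foldr (· ∪ ·) ∅ := by rw [h3]; simp [Finset.mem_Icc]; omega
      obtain ⟨k, hk, hzk⟩ := mem_U'.1 this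
      refine ⟨k, by simpa using hk, ?_⟩
      rw [hget k hk]
      split
      · rename_i hik
        subst hik
        exact Finset.mem_erase.2 ⟨by omega, hzk⟩
      · exact hzk
  · intro r hr
    rw [List.length_set] at hr
    obtain ⟨m, hm, hcond⟩ := h4 r hr
    refine ⟨m, ?_, ?_⟩
    · rw [hget r hr]
      split
      · rename_i hir
        subst hir
        have hxm : x ≤ m := hcond i hi le_rfl x hx
        exact Finset.mem_erase.2 ⟨by omega, hm⟩
      · exact hm
    · intro k hk hkr a ha
      rw [List.length_set] at hk
      rw [hget k hk] at ha
      exact hcond k hk hkr a (hsub k hk ha)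

lemma surj_aux {n : ℕ} (hn : 1 ≤ n) {L' : List (Finset ℕ)}
    (h : IsALOP (Finset.Icc 1 (n + 1)) L') :
    ∃ L m, IsALOP (Finset.Icc 1 n) L ∧ m ≤ L.length ∧ derive L m = L' := by
  have h' := (isALOP_iff).1 h
  obtain ⟨h1, h2, h3, h4⟩ := h'
  have h1U : (1 : ℕ) ∈ L'.foldr (· ∪ ·) ∅ := by rw [h3]; simp [Finset.mem_Icc]
  obtain ⟨i, hi, h1i⟩ := mem_U'.1 h1U
  by_cases hsing : ∃ x ∈ L'[i], x ≠ 1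
  · -- insert case
    obtain ⟨x, hx, hx1⟩ := hsing
    have hM := erase_isALOP h hi h1i hx hx1
    set M := L'.set i (L'[i].erase 1) with hMdef
    have hMlen : M.length = L'.length := by simp [hMdef]
    have hMelem : ∀ B ∈ M, ∀ y ∈ B, 1 ≤ y := by
      intro B hB y hy
      obtain ⟨k, hk, rfl⟩ := List.mem_iff_getElem.1 hB
      have := block_subset ((isALOP_iff).1 hM).2.2.1 hk hy
      simp [Finset.mem_Icc] at this
      omega
    have hup : shiftUp (shiftDown M) = M := shiftUp_shiftDown hMelem
    refine ⟨shiftDown M, i + 1, ?_, ?_, ?_⟩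
    · rw [← isALOP_shiftUp_iff (S := Finset.Icc 1 n), image_Icc, hup]
      exact hM
    · have : (shiftDown M).length = M.length := by simp [shiftDown]
      omega
    · rw [derive, if_neg (by omega)]
      simp only [Nat.add_sub_cancel, hup]
      have hiM : i < M.length := by omega
      rw [List.getD_eq_getElem _ _ hiM]
      have hMi : M[i] = L'[i].erase 1 := by
        simp only [hMdef]
        rw [List.getElem_set, if_pos rfl]
      rw [hMi, Finset.insert_erase h1i, hMdef, List.set_set]
      exact list_set_getElem_self hi
  · -- singleton case
    push_neg at hsing
    have hL'i : L'[i] = {1} := by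
      apply Finset.eq_singleton_iff_unique_mem.2
      exact ⟨h1i, fun y hy => hsing y hy⟩
    -- show i = 0
    have hi0 : i = 0 := by
      by_contra hne
      obtain ⟨m, hm, hcond⟩ := h4 i hi
      rw [hL'i, Finset.mem_singleton] at hm
      subst hm
      obtain ⟨y, hy⟩ := h1 (L'[0]'(by omega)) (List.getElem_mem (by omega))
      have hy1 : y ≤ 1 := hcond 0 (by omega) (by omega) y hy
      have hyI : y ∈ Finset.Icc 1 (n + 1) := block_subset h3 (by omega) hy
      simp [Finset.mem_Icc] at hyI
      have : y = 1 := by omega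
      subst this
      exact Finset.disjoint_left.1
        (pairwise_disjoint_getElem h2 (by omega : 0 < L'.length) hi (Ne.symm hne)) hy h1i
    subst hi0
    -- L' = {1} :: tail
    obtain ⟨B, T, rfl⟩ : ∃ B T, L' = B :: T := by
      cases L' with
      | nil => simp at hi
      | cons B T => exact ⟨B, T, rfl⟩
    have hB1 : B = {1} := by simpa using hL'i
    subst hB1
    have hT := tail_isALOP (n := n) (by rw [isALOP_iff]; exact ⟨h1, h2, h3, h4⟩)
    have hTelem : ∀ B' ∈ T, ∀ y ∈ B', 1 ≤ y := by
      intro B' hB' y hy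
      have hyU : y ∈ T.foldr (· ∪ ·) ∅ := mem_U.2 ⟨B', hB', hy⟩
      rw [((isALOP_iff).1 hT).2.2.1] at hyU
      simp [Finset.mem_Icc] at hyU
      omega
    have hup : shiftUp (shiftDown T) = T := shiftUp_shiftDown hTelem
    refine ⟨shiftDown T, 0, ?_, by omega, ?_⟩
    · rw [← isALOP_shiftUp_iff (S := Finset.Icc 1 n), image_Icc, hup]
      exact hT
    · rw [derive, if_pos rfl, hup]

/-- (a) each derived partition `λ^[m]` (for `λ ∈ P_n`, `0 ≤ m ≤ length λ`)
is an anti-lexicographically ordered partition of `{1, …, n+1}`; (b) the map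
`(λ, m) ↦ λ^[m]` is a bijection from `{(λ, m) : λ ∈ P_n, 0 ≤ m ≤ length λ}` onto `P_{n+1}`. -/
theorem stmt2 (n : ℕ) (hn : 1 ≤ n) :
    (∀ L : List (Finset ℕ), IsALOP (Finset.Icc 1 n) L →
      ∀ m ≤ L.length, IsALOP (Finset.Icc 1 (n + 1)) (derive L m)) ∧
    Set.BijOn (fun p : List (Finset ℕ) × ℕ => derive p.1 p.2)
      {p | IsALOP (Finset.Icc 1 n) p.1 ∧ p.2 ≤ p.1.length}
      {L | IsALOP (Finset.Icc 1 (n + 1)) L} := by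
  constructor
  · intro L hL m hm
    exact part_a hn hL hm
  · refine ⟨fun p hp => part_a hn hp.1 hp.2, ?_, ?_⟩
    · rintro ⟨L, m⟩ ⟨hL, hm⟩ ⟨L', m'⟩ ⟨hL', hm'⟩ heq
      obtain ⟨e1, e2⟩ := inj_aux hL hL' hm hm' heq
      exact Prod.ext e1 e2
    · intro L' hL'
      obtain ⟨L, m, h1, h2, h3⟩ := surj_aux hn hL'
      exact ⟨(L, m), ⟨h1, h2⟩, h3⟩
end

section
/- The multiplication defined on G × 𝔤^k in the context is associative: (a·b)·c = a·(b·c) for all a, b, c ∈ G × 𝔤^k. -/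
section Jet

variable {R : Type*} [CommRing R] {𝔤 : Type*} [LieRing 𝔤] [LieAlgebra R 𝔤]
variable {G : Type*} [Group G]

/-- Extend a `k`-tuple `(x_1, …, x_k)` (with slot `n` stored at index `n-1`) to a
function on `ℕ`, by `0` outside `{1, …, k}`. -/
def extX (k : ℕ) (x : Fin k → 𝔤) : ℕ → 𝔤 :=
  fun n => if h : 1 ≤ n ∧ n ≤ k then x ⟨n - 1, by omega⟩ else 0

/-- The `n`-th component of the jet product:
`z_n = x_n + Σ_{ℓ} Σ_{i₁+⋯+i_ℓ=n} N_{(i₁,…,i_ℓ)} ad_{x_{i_{ℓ−1}}} ⋯ ad_{x_{i₁}} (y'_{i_ℓ})`,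
where `y'` already incorporates `Ad_g`. -/
def jetZ (x y : ℕ → 𝔤) (n : ℕ) : 𝔤 :=
  x n + ∑ c : Composition n,
    Ncoef c.blocks •
      (c.blocks.dropLast.foldl (fun v i => ⁅x i, v⁆) (y (c.blocks.getLast?.getD 0)))

/-- The multiplication on `G × 𝔤^k`. -/
def jetMul (k : ℕ) (Ad : G → 𝔤 →ₗ⁅R⁆ 𝔤) (p q : G × (Fin k → 𝔤)) :
    G × (Fin k → 𝔤) :=
  (p.1 * q.1, fun j => jetZ (extX k p.2) (fun i => Ad p.1 (extX k q.2 i)) (j.val + 1))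

end Jet

namespace JetAux

lemma Ncoef_concat (l : List ℕ) (j : ℕ) :
    Ncoef (l ++ [j]) = Nat.choose (l.sum + j - 1) (j - 1) * Ncoef l := by
  induction l using Ncoef.induct with
  | case1 => simp [Ncoef]
  | case2 a => show Ncoef [a, j] = _ ; rw [Ncoef, Ncoef, Ncoef]; simp
  | case3 a b rest ih =>
      show Ncoef (a :: b :: (rest ++ [j])) = _
      rw [Ncoef, show (a+b) :: (rest ++ [j]) = ((a+b) :: rest) ++ [j] from rfl, ih, Ncoef]
      push_cast [List.sum_cons]
      ring_nf

section LieAux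
variable {𝔤 : Type*} [LieRing 𝔤] {𝔥 : Type*} [LieRing 𝔥]

lemma lie_sum' {α : Type*} (x : 𝔤) (s : Finset α) (f : α → 𝔤) :
    ⁅x, ∑ i ∈ s, f i⁆ = ∑ i ∈ s, ⁅x, f i⁆ :=
  map_sum (⟨⟨fun v => ⁅x, v⁆, lie_zero x⟩, lie_add x⟩ : 𝔤 →+ 𝔤) f s

lemma sum_lie' {α : Type*} (x : 𝔤) (s : Finset α) (f : α → 𝔤) :
    ⁅∑ i ∈ s, f i, x⁆ = ∑ i ∈ s, ⁅f i, x⁆ :=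
  map_sum (⟨⟨fun v => ⁅v, x⁆, zero_lie x⟩, fun a b => add_lie a b x⟩ : 𝔤 →+ 𝔤) f s

/-- iterated brackets: `adFold x [i₁,…,iₗ] v = ad_{x iₗ} ⋯ ad_{x i₁} v`. -/
def adFold (x : ℕ → 𝔤) (l : List ℕ) (v : 𝔤) : 𝔤 := l.foldl (fun w i => ⁅x i, w⁆) v

@[simp] lemma adFold_nil (x : ℕ → 𝔤) (v : 𝔤) : adFold x [] v = v := rfl

lemma adFold_cons (x : ℕ → 𝔤) (i : ℕ) (l : List ℕ) (v : 𝔤) :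
    adFold x (i :: l) v = adFold x l ⁅x i, v⁆ := rfl

lemma adFold_concat (x : ℕ → 𝔤) (l : List ℕ) (j : ℕ) (v : 𝔤) :
    adFold x (l ++ [j]) v = ⁅x j, adFold x l v⁆ := by
  simp [adFold, List.foldl_append]

lemma adFold_add (x : ℕ → 𝔤) (l : List ℕ) (u v : 𝔤) :
    adFold x l (u + v) = adFold x l u + adFold x l v := by
  induction l generalizing u v with
  | nil => rfl
  | cons i l ih => rw [adFold_cons, adFold_cons, adFold_cons, lie_add]; exact ih _ _

lemma adFold_nsmul (x : ℕ → 𝔤) (l : List ℕ) (n : ℕ) (v : 𝔤) :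
    adFold x l (n • v) = n • adFold x l v := by
  induction l generalizing v with
  | nil => rfl
  | cons i l ih => rw [adFold_cons, adFold_cons, lie_nsmul]; exact ih _

@[simp] lemma adFold_zero (x : ℕ → 𝔤) (l : List ℕ) : adFold x l 0 = 0 := by
  induction l with
  | nil => rfl
  | cons i l ih => rw [adFold_cons, lie_zero]; exact ih

lemma adFold_congr {x x' : ℕ → 𝔤} {l : List ℕ} (h : ∀ i ∈ l, x i = x' i) (v : 𝔤) :
    adFold x l v = adFold x' l v := by
  induction l generalizing v with
  | nil => rfl
  | cons i l ih =>
      rw [adFold_cons, adFold_cons, h i (List.mem_cons_self (a := i) (l := l))]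
      exact ih (fun j hj => h j (List.mem_cons_of_mem i hj)) _

lemma adFold_map (f : 𝔤 →+ 𝔥) (hf : ∀ a b, f ⁅a, b⁆ = ⁅f a, f b⁆)
    (x : ℕ → 𝔤) (l : List ℕ) (v : 𝔤) :
    f (adFold x l v) = adFold (fun i => f (x i)) l (f v) := by
  induction l generalizing v with
  | nil => rfl
  | cons i l ih => rw [adFold_cons, adFold_cons, ih, hf]

end LieAux

/-- `Composition 0` is a subsingleton with unique element having empty blocks. -/
lemma comp_zero_blocks (c : Composition 0) : c.blocks = [] := by
  cases hc : c.blocks with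
  | nil => rfl
  | cons i t =>
      exfalso
      have h1 : 1 ≤ i := c.one_le_blocks (hc ▸ List.mem_cons_self (a := i) (l := t))
      have h2 := c.blocks_sum
      rw [hc, List.sum_cons] at h2
      omega

instance compZeroUnique : Unique (Composition 0) where
  default := ⟨[], by simp, by simp⟩
  uniq c := by ext1; rw [comp_zero_blocks c]

/-- blocks of a composition of `n+1` are nonempty. -/
lemma blocks_ne_nil' {n : ℕ} (c : Composition (n + 1)) : c.blocks ≠ [] := by
  intro h
  have := c.blocks_sum
  rw [h] at this
  simp at this

lemma one_le_getLast {n : ℕ} (c : Composition (n + 1)) :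
    1 ≤ c.blocks.getLast (blocks_ne_nil' c) :=
  c.one_le_blocks (List.getLast_mem _)

lemma getLast_le {n : ℕ} (c : Composition (n + 1)) :
    c.blocks.getLast (blocks_ne_nil' c) ≤ n + 1 := by
  have := List.single_le_sum (fun (x : ℕ) _ => Nat.zero_le x) _
    (List.getLast_mem (blocks_ne_nil' c))
  rwa [c.blocks_sum] at this

lemma dropLast_sum {n : ℕ} (c : Composition (n + 1)) :
    c.blocks.dropLast.sum = n + 1 - c.blocks.getLast (blocks_ne_nil' c) := by
  have h := c.blocks_sum
  conv_lhs at h => rw [← List.dropLast_append_getLast (blocks_ne_nil' c)]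
  rw [List.sum_append, List.sum_cons, List.sum_nil] at h
  omega

lemma comp_heq {m m' : ℕ} (h : m = m') (c : Composition m) (c' : Composition m')
    (hb : c.blocks = c'.blocks) : HEq c c' := by
  subst h
  exact heq_of_eq (by ext1; rw [hb])

/-- attach the last block back. -/
def compUnsplit (n : ℕ) (jd : (j : Fin (n + 1)) × Composition (n - j.val)) :
    Composition (n + 1) where
  blocks := jd.2.blocks ++ [jd.1.val + 1]
  blocks_pos := by
    intro i hi
    rcases List.mem_append.1 hi with h | h
    · exact jd.2.blocks_pos h
    · simp at h; omega
  blocks_sum := by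
    rw [List.sum_append, jd.2.blocks_sum, List.sum_cons, List.sum_nil]
    have := jd.1.isLt
    omega

lemma compUnsplit_inj (n : ℕ) : Function.Injective (compUnsplit n) := by
  rintro ⟨j, d⟩ ⟨j', d'⟩ h
  have hb : d.blocks ++ [j.val + 1] = d'.blocks ++ [j'.val + 1] :=
    congrArg Composition.blocks h
  have hj : j = j' := by
    have h1 := congrArg (fun l => List.getLast? l) hb
    simp only [List.getLast?_concat, Option.some.injEq] at h1
    apply Fin.ext
    omega
  subst hj
  have hd : d.blocks = d'.blocks := by
    have h2 := congrArg (fun l => List.dropLast l) hb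
    simpa only [List.dropLast_concat] using h2
  congr 1
  ext1
  exact hd

/-- Split off the last block of a composition of `n+1`. -/
def compSplit (n : ℕ) : Composition (n + 1) ≃ (j : Fin (n + 1)) × Composition (n - j.val) where
  toFun c :=
    ⟨⟨c.blocks.getLast (blocks_ne_nil' c) - 1, by
        have := one_le_getLast c; have := getLast_le c; omega⟩,
      { blocks := c.blocks.dropLast
        blocks_pos := fun hi => c.blocks_pos (List.dropLast_subset _ hi)
        blocks_sum := by
          show c.blocks.dropLast.sum = n - (c.blocks.getLast (blocks_ne_nil' c) - 1)
          rw [dropLast_sum]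
          have := one_le_getLast c; have := getLast_le c; omega }⟩
  invFun := compUnsplit n
  left_inv c := by
    ext1
    show c.blocks.dropLast ++ [c.blocks.getLast (blocks_ne_nil' c) - 1 + 1] = c.blocks
    have h1 := one_le_getLast c
    rw [show c.blocks.getLast (blocks_ne_nil' c) - 1 + 1
        = c.blocks.getLast (blocks_ne_nil' c) by omega]
    exact List.dropLast_append_getLast _
  right_inv jd := by
    apply compUnsplit_inj
    ext1
    show (compUnsplit n jd).blocks.dropLast ++ [(compUnsplit n jd).blocks.getLast _ - 1 + 1]
      = (compUnsplit n jd).blocks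
    have h1 := one_le_getLast (compUnsplit n jd)
    rw [show (compUnsplit n jd).blocks.getLast (blocks_ne_nil' _) - 1 + 1
        = (compUnsplit n jd).blocks.getLast (blocks_ne_nil' _) by omega]
    exact List.dropLast_append_getLast _

@[simp] lemma compSplit_symm_blocks (n : ℕ) (jd : (j : Fin (n + 1)) × Composition (n - j.val)) :
    ((compSplit n).symm jd).blocks = jd.2.blocks ++ [jd.1.val + 1] := rfl


section TW
variable {𝔤 : Type*} [LieRing 𝔤]

/-- `Tm x m v = Σ_{d ⊨ m} Ncoef(d) ad_{x_{d_ℓ}}⋯ad_{x_{d_1}} v`. -/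
def Tm (x : ℕ → 𝔤) (m : ℕ) (v : 𝔤) : 𝔤 :=
  ∑ d : Composition m, Ncoef d.blocks • adFold x d.blocks v

def Wn (x y : ℕ → 𝔤) (n : ℕ) : 𝔤 :=
  ∑ c : Composition n,
    Ncoef c.blocks • adFold x c.blocks.dropLast (y (c.blocks.getLast?.getD 0))

@[simp] lemma Tm_zero (x : ℕ → 𝔤) (v : 𝔤) : Tm x 0 v = v := by
  rw [Tm, Fintype.sum_unique]
  show Ncoef [] • adFold x [] v = v
  simp [Ncoef]

lemma Tm_add (x : ℕ → 𝔤) (m : ℕ) (u v : 𝔤) :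
    Tm x m (u + v) = Tm x m u + Tm x m v := by
  rw [Tm, Tm, Tm, ← Finset.sum_add_distrib]
  exact Finset.sum_congr rfl fun d _ => by rw [adFold_add, smul_add]

lemma Tm_nsmul (x : ℕ → 𝔤) (m : ℕ) (a : ℕ) (v : 𝔤) :
    Tm x m (a • v) = a • Tm x m v := by
  rw [Tm, Tm, Finset.smul_sum]
  exact Finset.sum_congr rfl fun d _ => by
    rw [adFold_nsmul, smul_comm]

lemma Tm_sum (x : ℕ → 𝔤) (m : ℕ) {α : Type*} (s : Finset α) (f : α → 𝔤) :
    Tm x m (∑ i ∈ s, f i) = ∑ i ∈ s, Tm x m (f i) := by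
  classical
  induction s using Finset.induction with
  | empty => simp [Tm]
  | insert a s h ih => rw [Finset.sum_insert h, Tm_add, ih, Finset.sum_insert h]

lemma Tm_succ (x : ℕ → 𝔤) (m : ℕ) (v : 𝔤) :
    Tm x (m + 1) v
      = ∑ j ∈ Finset.range (m + 1), m.choose j • ⁅x (j + 1), Tm x (m - j) v⁆ := by
  rw [Tm, ← Equiv.sum_comp (compSplit m).symm
      (fun c => Ncoef c.blocks • adFold x c.blocks v), ← Finset.univ_sigma_univ,
    Finset.sum_sigma,
    ← Fin.sum_univ_eq_sum_range (fun j => m.choose j • ⁅x (j + 1), Tm x (m - j) v⁆) (m + 1)]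
  apply Finset.sum_congr rfl
  intro j _
  rw [Tm, lie_sum', Finset.smul_sum]
  apply Finset.sum_congr rfl
  intro d _
  rw [compSplit_symm_blocks, adFold_concat, Ncoef_concat, d.blocks_sum]
  have hj : j.val ≤ m := by omega
  rw [show m - j.val + (j.val + 1) - 1 = m by omega, Nat.add_sub_cancel,
    mul_smul, lie_nsmul]

lemma Wn_succ (x y : ℕ → 𝔤) (n : ℕ) :
    Wn x y (n + 1)
      = ∑ j ∈ Finset.range (n + 1), n.choose j • Tm x (n - j) (y (j + 1)) := by
  rw [Wn, ← Equiv.sum_comp (compSplit n).symm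
      (fun c => Ncoef c.blocks • adFold x c.blocks.dropLast (y (c.blocks.getLast?.getD 0))),
    ← Finset.univ_sigma_univ, Finset.sum_sigma,
    ← Fin.sum_univ_eq_sum_range (fun j => n.choose j • Tm x (n - j) (y (j + 1))) (n + 1)]
  apply Finset.sum_congr rfl
  intro j _
  rw [Tm, Finset.smul_sum]
  apply Finset.sum_congr rfl
  intro d _
  rw [compSplit_symm_blocks, List.dropLast_concat, List.getLast?_concat, Option.getD_some,
    Ncoef_concat, d.blocks_sum]
  have hj : j.val ≤ n := by omega
  rw [show n - j.val + (j.val + 1) - 1 = n by omega, Nat.add_sub_cancel, mul_smul]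

end TW

section Binom

lemma choose_trinom {M A B : ℕ} (h : A + B ≤ M) :
    M.choose A * (M - A).choose B = M.choose (A + B) * (A + B).choose A := by
  have h2 := Nat.choose_mul (n := M) (show A ≤ A + B from Nat.le_add_right A B)
  rw [h2, Nat.add_sub_cancel_left]

lemma choose_swap {M A B : ℕ} (h : A + B ≤ M) :
    M.choose A * (M - A).choose B = M.choose B * (M - B).choose A := by
  rw [choose_trinom h, choose_trinom (show B + A ≤ M by omega), Nat.add_comm B A]
  congr 1
  have h2 := Nat.choose_symm (show B ≤ A + B by omega)
  rw [show A + B - B = A by omega] at h2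
  exact h2

lemma choose_triple {m j i p : ℕ} (hij : i ≤ j) (hjm : j ≤ m) (hp : j + p ≤ m) :
    m.choose j * (j.choose i * (m - j).choose p)
      = m.choose (i + p) * ((i + p).choose i * (m - i - p).choose (j - i)) := by
  have h1 : m.choose j * j.choose i = m.choose i * (m - i).choose (j - i) :=
    Nat.choose_mul hij
  have h2 : m.choose (i + p) * (i + p).choose i = m.choose i * (m - i).choose p := by
    have := Nat.choose_mul (n := m) (Nat.le_add_right i p)
    rwa [Nat.add_sub_cancel_left] at this
  have h3 : (m - i).choose (j - i) * (m - i - (j - i)).choose p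
      = (m - i).choose p * (m - i - p).choose (j - i) :=
    choose_swap (by omega)
  have h4 : m - i - (j - i) = m - j := by omega
  rw [← Nat.mul_assoc, h1, ← Nat.mul_assoc, h2]
  rw [Nat.mul_assoc, Nat.mul_assoc]
  congr 1
  rw [← h4, h3]

end Binom

section Pascal
variable {M : Type*} [AddCommMonoid M]

lemma pascal_smul (q : ℕ) (f : ℕ → M) :
    ∑ r ∈ Finset.range (q + 2), (q + 1).choose r • f r
      = ∑ r ∈ Finset.range (q + 1), q.choose r • f r
        + ∑ r ∈ Finset.range (q + 1), q.choose r • f (r + 1) := by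
  rw [Finset.sum_range_succ' (fun r => (q + 1).choose r • f r) (q + 1)]
  simp only [Nat.choose_succ_succ, add_smul, Finset.sum_add_distrib,
    Nat.choose_zero_right, one_smul]
  rw [Finset.sum_range_succ (fun i => q.choose (i + 1) • f (i + 1)) q,
    Nat.choose_succ_self, zero_smul, add_zero,
    Finset.sum_range_succ' (fun r => q.choose r • f r) q]
  simp only [Nat.choose_zero_right, one_smul]
  abel

end Pascal


section Reindex
variable {M : Type*} [AddCommMonoid M]

lemma sum_tri_swap (N : ℕ) (F : ℕ → ℕ → M) :
    ∑ j ∈ Finset.range (N + 1), ∑ r ∈ Finset.range (N + 1 - j), F j r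
      = ∑ r ∈ Finset.range (N + 1), ∑ j ∈ Finset.range (N + 1 - r), F j r := by
  rw [Finset.sum_sigma', Finset.sum_sigma']
  refine Finset.sum_nbij' (fun p => ⟨p.2, p.1⟩) (fun p => ⟨p.2, p.1⟩) ?_ ?_ ?_ ?_ ?_
  · rintro ⟨a, b⟩ h
    simp only [Finset.mem_sigma, Finset.mem_range] at h ⊢
    omega
  · rintro ⟨a, b⟩ h
    simp only [Finset.mem_sigma, Finset.mem_range] at h ⊢
    omega
  · rintro ⟨a, b⟩ _
    rfl
  · rintro ⟨a, b⟩ _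
    rfl
  · rintro ⟨a, b⟩ _
    rfl

lemma sum_tri_reindex (N : ℕ) (F : ℕ → ℕ → M) :
    ∑ i ∈ Finset.range (N + 1), ∑ p ∈ Finset.range (N + 1 - i), F i p
      = ∑ j ∈ Finset.range (N + 1), ∑ i ∈ Finset.range (j + 1), F i (j - i) := by
  rw [Finset.sum_sigma', Finset.sum_sigma']
  refine Finset.sum_nbij' (fun p => ⟨p.1 + p.2, p.1⟩) (fun p => ⟨p.2, p.1 - p.2⟩) ?_ ?_ ?_ ?_ ?_
  · rintro ⟨a, b⟩ h
    simp only [Finset.mem_sigma, Finset.mem_range] at h ⊢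
    omega
  · rintro ⟨a, b⟩ h
    simp only [Finset.mem_sigma, Finset.mem_range] at h ⊢
    omega
  · rintro ⟨a, b⟩ _
    show (⟨a, a + b - a⟩ : (_ : ℕ) × ℕ) = ⟨a, b⟩
    rw [Nat.add_sub_cancel_left]
  · rintro ⟨a, b⟩ h
    simp only [Finset.mem_sigma, Finset.mem_range] at h
    show (⟨b + (a - b), b⟩ : (_ : ℕ) × ℕ) = ⟨a, b⟩
    rw [show b + (a - b) = a by omega]
  · rintro ⟨a, b⟩ _
    simp only [Nat.add_sub_cancel_left]

lemma sum_tri_swap' (N i : ℕ) (F : ℕ → ℕ → M) :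
    ∑ r ∈ Finset.range (N + 1 - i), ∑ p ∈ Finset.range (N + 1 - (i + r)), F r p
      = ∑ p ∈ Finset.range (N + 1 - i), ∑ r ∈ Finset.range (N + 1 - (i + p)), F r p := by
  rw [Finset.sum_sigma', Finset.sum_sigma']
  refine Finset.sum_nbij' (fun p => ⟨p.2, p.1⟩) (fun p => ⟨p.2, p.1⟩) ?_ ?_ ?_ ?_ ?_
  · rintro ⟨a, b⟩ h
    simp only [Finset.mem_sigma, Finset.mem_range] at h ⊢
    omega
  · rintro ⟨a, b⟩ h
    simp only [Finset.mem_sigma, Finset.mem_range] at h ⊢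
    omega
  · rintro ⟨a, b⟩ _
    rfl
  · rintro ⟨a, b⟩ _
    rfl
  · rintro ⟨a, b⟩ _
    rfl

end Reindex

section Main
variable {𝔤 : Type*} [LieRing 𝔤]

/-- The automorphism property: `T_x` preserves brackets (divided-power coefficientwise). -/
lemma Tm_lie (x : ℕ → 𝔤) (q : ℕ) :
    ∀ u v : 𝔤, Tm x q ⁅u, v⁆
      = ∑ r ∈ Finset.range (q + 1), q.choose r • ⁅Tm x r u, Tm x (q - r) v⁆ := by
  induction q using Nat.strong_induction_on with
  | _ q ih =>
  cases q with
  | zero => intro u v; simp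
  | succ q =>
    intro u v
    rw [Tm_succ]
    have step1 : ∀ j ∈ Finset.range (q + 1),
        q.choose j • ⁅x (j + 1), Tm x (q - j) ⁅u, v⁆⁆
          = (∑ r ∈ Finset.range (q + 1 - j), (q.choose j * (q - j).choose r) •
                ⁅⁅x (j + 1), Tm x r u⁆, Tm x (q - j - r) v⁆)
            + ∑ r ∈ Finset.range (q + 1 - j), (q.choose j * (q - j).choose r) •
                ⁅Tm x r u, ⁅x (j + 1), Tm x (q - j - r) v⁆⁆ := by
      intro j hj
      simp only [Finset.mem_range] at hj
      rw [ih (q - j) (by omega) u v, show q - j + 1 = q + 1 - j by omega,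
        lie_sum', Finset.smul_sum, ← Finset.sum_add_distrib]
      apply Finset.sum_congr rfl
      intro r _
      rw [lie_nsmul, leibniz_lie, smul_smul, smul_add]
    rw [Finset.sum_congr rfl step1, Finset.sum_add_distrib]
    -- RHS via Pascal
    rw [pascal_smul q (fun r => ⁅Tm x r u, Tm x (q + 1 - r) v⁆), add_comm
      (∑ j ∈ Finset.range (q + 1), ∑ r ∈ Finset.range (q + 1 - j),
        (q.choose j * (q - j).choose r) • ⁅⁅x (j + 1), Tm x r u⁆, Tm x (q - j - r) v⁆)]
    congr 1
    · -- S_B = first pascal sum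
      rw [sum_tri_swap q (fun j r => (q.choose j * (q - j).choose r) •
        ⁅Tm x r u, ⁅x (j + 1), Tm x (q - j - r) v⁆⁆)]
      apply Finset.sum_congr rfl
      intro r hr
      simp only [Finset.mem_range] at hr
      rw [show q + 1 - r = (q - r) + 1 by omega, Tm_succ, lie_sum', Finset.smul_sum]
      apply Finset.sum_congr rfl
      intro j hj
      simp only [Finset.mem_range] at hj
      rw [lie_nsmul, smul_smul, choose_swap (show j + r ≤ q by omega),
        show q - j - r = q - r - j by omega]
    · -- S_A = second pascal sum
      rw [sum_tri_reindex q (fun j r => (q.choose j * (q - j).choose r) •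
        ⁅⁅x (j + 1), Tm x r u⁆, Tm x (q - j - r) v⁆)]
      apply Finset.sum_congr rfl
      intro s hs
      simp only [Finset.mem_range] at hs
      rw [Tm_succ, sum_lie', Finset.smul_sum]
      apply Finset.sum_congr rfl
      intro j hj
      simp only [Finset.mem_range] at hj
      rw [nsmul_lie, smul_smul, ← Nat.choose_mul (n := q) (show j ≤ s by omega),
        show q - j - (s - j) = q + 1 - (s + 1) by omega]

/-- the product sequence (with trivial `Ad`). -/
def zmul (x y : ℕ → 𝔤) : ℕ → 𝔤 := fun n => x n + Wn x y n

@[simp] lemma Wn_zero (x y : ℕ → 𝔤) : Wn x y 0 = y 0 := by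
  rw [Wn, Fintype.sum_unique]
  show Ncoef [] • adFold x ([] : List ℕ).dropLast (y (([] : List ℕ).getLast?.getD 0)) = y 0
  simp [Ncoef]

lemma zmul_succ (x y : ℕ → 𝔤) (n : ℕ) :
    zmul x y (n + 1)
      = x (n + 1) + ∑ j ∈ Finset.range (n + 1), n.choose j • Tm x (n - j) (y (j + 1)) := by
  rw [zmul, Wn_succ]

/-- multiplicativity: `T_{x·y} = T_x T_y` (divided-power coefficientwise). -/
lemma Tm_zmul (x y : ℕ → 𝔤) (m : ℕ) :
    ∀ v : 𝔤, Tm (zmul x y) m v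
      = ∑ p ∈ Finset.range (m + 1), m.choose p • Tm x (m - p) (Tm y p v) := by
  induction m using Nat.strong_induction_on with
  | _ m ih =>
  cases m with
  | zero => intro v; simp
  | succ m =>
    intro v
    rw [Tm_succ]
    have step1 : ∀ j ∈ Finset.range (m + 1),
        m.choose j • ⁅zmul x y (j + 1), Tm (zmul x y) (m - j) v⁆
          = (∑ p ∈ Finset.range (m + 1 - j), (m.choose j * (m - j).choose p) •
                ⁅x (j + 1), Tm x (m - j - p) (Tm y p v)⁆)
            + ∑ i ∈ Finset.range (j + 1), ∑ p ∈ Finset.range (m + 1 - j),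
                (m.choose j * (j.choose i * (m - j).choose p)) •
                  ⁅Tm x (j - i) (y (i + 1)), Tm x (m - j - p) (Tm y p v)⁆ := by
      intro j hj
      simp only [Finset.mem_range] at hj
      rw [ih (m - j) (by omega) v, show m - j + 1 = m + 1 - j by omega, zmul_succ,
        add_lie, smul_add]
      congr 1
      · rw [lie_sum', Finset.smul_sum]
        apply Finset.sum_congr rfl
        intro p _
        rw [lie_nsmul, smul_smul]
      · rw [sum_lie', Finset.smul_sum]
        apply Finset.sum_congr rfl
        intro i _
        rw [nsmul_lie, lie_sum', Finset.smul_sum, Finset.smul_sum]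
        apply Finset.sum_congr rfl
        intro p _
        rw [lie_nsmul, smul_smul, smul_smul, Nat.mul_assoc]
    rw [Finset.sum_congr rfl step1, Finset.sum_add_distrib]
    rw [pascal_smul m (fun p => Tm x (m + 1 - p) (Tm y p v))]
    congr 1
    · -- S1 = first pascal sum
      rw [sum_tri_swap m (fun j p => (m.choose j * (m - j).choose p) •
        ⁅x (j + 1), Tm x (m - j - p) (Tm y p v)⁆)]
      apply Finset.sum_congr rfl
      intro p hp
      simp only [Finset.mem_range] at hp
      rw [show m + 1 - p = (m - p) + 1 by omega, Tm_succ, Finset.smul_sum]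
      apply Finset.sum_congr rfl
      intro j hj
      simp only [Finset.mem_range] at hj
      rw [smul_smul, choose_swap (show j + p ≤ m by omega),
        show m - j - p = m - p - j by omega]
    · -- S2 = second pascal sum
      -- rewrite S2 summand into reindex form
      have hS2 : ∀ j ∈ Finset.range (m + 1), (∑ i ∈ Finset.range (j + 1),
            ∑ p ∈ Finset.range (m + 1 - j),
              (m.choose j * (j.choose i * (m - j).choose p)) •
                ⁅Tm x (j - i) (y (i + 1)), Tm x (m - j - p) (Tm y p v)⁆)
          = ∑ i ∈ Finset.range (j + 1),
              (fun i r => ∑ p ∈ Finset.range (m + 1 - (i + r)),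
                (m.choose (i + r) * ((i + r).choose i * (m - (i + r)).choose p)) •
                  ⁅Tm x r (y (i + 1)), Tm x (m - (i + r) - p) (Tm y p v)⁆) i (j - i) := by
        intro j hj
        simp only [Finset.mem_range] at hj
        apply Finset.sum_congr rfl
        intro i hi
        simp only [Finset.mem_range] at hi
        simp only [show i + (j - i) = j by omega]
      rw [Finset.sum_congr rfl hS2, ← sum_tri_reindex m
        (fun i r => ∑ p ∈ Finset.range (m + 1 - (i + r)),
          (m.choose (i + r) * ((i + r).choose i * (m - (i + r)).choose p)) •
            ⁅Tm x r (y (i + 1)), Tm x (m - (i + r) - p) (Tm y p v)⁆)]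
      -- now expand the RHS (second pascal sum) similarly
      have step2 : ∀ p ∈ Finset.range (m + 1),
          m.choose p • Tm x (m + 1 - (p + 1)) (Tm y (p + 1) v)
            = ∑ b ∈ Finset.range (p + 1),
                (fun b p2 => ∑ r ∈ Finset.range (m + 1 - (b + p2)),
                  (m.choose (b + p2) * ((b + p2).choose b * (m - (b + p2)).choose r)) •
                    ⁅Tm x r (y (b + 1)), Tm x (m - (b + p2) - r) (Tm y p2 v)⁆) b (p - b) := by
        intro p hp
        simp only [Finset.mem_range] at hp
        rw [show m + 1 - (p + 1) = m - p by omega, Tm_succ, Tm_sum, Finset.smul_sum]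
        apply Finset.sum_congr rfl
        intro b hb
        simp only [Finset.mem_range] at hb
        rw [Tm_nsmul, Tm_lie, Finset.smul_sum, Finset.smul_sum,
          show m - p + 1 = m + 1 - p by omega]
        simp only [show b + (p - b) = p by omega]
        apply Finset.sum_congr rfl
        intro r _
        rw [smul_smul, smul_smul, Nat.mul_assoc]
      rw [Finset.sum_congr rfl step2, ← sum_tri_reindex m
        (fun b p2 => ∑ r ∈ Finset.range (m + 1 - (b + p2)),
          (m.choose (b + p2) * ((b + p2).choose b * (m - (b + p2)).choose r)) •
            ⁅Tm x r (y (b + 1)), Tm x (m - (b + p2) - r) (Tm y p2 v)⁆)]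
      apply Finset.sum_congr rfl
      intro i hi
      simp only [Finset.mem_range] at hi
      rw [sum_tri_swap' m i (fun r p => (m.choose (i + r) * ((i + r).choose i *
        (m - (i + r)).choose p)) • ⁅Tm x r (y (i + 1)), Tm x (m - (i + r) - p) (Tm y p v)⁆)]
      apply Finset.sum_congr rfl
      intro p hp
      simp only [Finset.mem_range] at hp
      apply Finset.sum_congr rfl
      intro r hr
      simp only [Finset.mem_range] at hr
      rw [choose_triple (show i ≤ i + r from Nat.le_add_right i r) (show i + r ≤ m by omega)
        (show (i + r) + p ≤ m by omega)]
      rw [show i + r - i = r by omega, show m - i - p = m - (i + p) by omega,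
        show m - (i + r) - p = m - (i + p) - r by omega]

/-- associativity of `zmul`. -/
lemma zmul_assoc (x y w : ℕ → 𝔤) (n : ℕ) :
    zmul (zmul x y) w n = zmul x (zmul y w) n := by
  cases n with
  | zero => simp [zmul, add_assoc]
  | succ n =>
    rw [zmul_succ (zmul x y) w n, zmul_succ x y n, zmul_succ x (zmul y w) n]
    have step1 : ∀ i ∈ Finset.range (n + 1),
        n.choose i • Tm (zmul x y) (n - i) (w (i + 1))
          = ∑ p ∈ Finset.range (n + 1 - i),
              (fun i p => (n.choose (i + p) * (i + p).choose i) •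
                Tm x (n - (i + p)) (Tm y p (w (i + 1)))) i p := by
      intro i hi
      simp only [Finset.mem_range] at hi
      rw [Tm_zmul, show n - i + 1 = n + 1 - i by omega, Finset.smul_sum]
      apply Finset.sum_congr rfl
      intro p hp
      simp only [Finset.mem_range] at hp
      rw [smul_smul, choose_trinom (show i + p ≤ n by omega),
        show n - i - p = n - (i + p) by omega]
    rw [Finset.sum_congr rfl step1, sum_tri_reindex n
      (fun i p => (n.choose (i + p) * (i + p).choose i) •
        Tm x (n - (i + p)) (Tm y p (w (i + 1))))]
    have step2 : ∀ j ∈ Finset.range (n + 1),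
        n.choose j • Tm x (n - j) (zmul y w (j + 1))
          = n.choose j • Tm x (n - j) (y (j + 1))
            + ∑ i ∈ Finset.range (j + 1),
                (n.choose j * j.choose i) • Tm x (n - j) (Tm y (j - i) (w (i + 1))) := by
      intro j hj
      rw [zmul_succ y w j, Tm_add, Tm_sum, smul_add, Finset.smul_sum]
      congr 1
      apply Finset.sum_congr rfl
      intro i _
      rw [Tm_nsmul, smul_smul]
    rw [Finset.sum_congr rfl step2, Finset.sum_add_distrib, add_assoc]
    congr 1
    congr 1
    apply Finset.sum_congr rfl
    intro j hj
    simp only [Finset.mem_range] at hj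
    apply Finset.sum_congr rfl
    intro i hi
    simp only [Finset.mem_range] at hi
    simp only [show i + (j - i) = j by omega]

lemma blocks_le {n : ℕ} (c : Composition n) {i : ℕ} (h : i ∈ c.blocks) : i ≤ n := by
  have := List.single_le_sum (fun (x : ℕ) _ => Nat.zero_le x) i h
  rwa [c.blocks_sum] at this

/-- `Wn x y (n+1)` only depends on values of `x`, `y` on `{1,…,n+1}`. -/
lemma Wn_congr {x x' y y' : ℕ → 𝔤} (n : ℕ)
    (hx : ∀ i, 1 ≤ i → i ≤ n + 1 → x i = x' i)
    (hy : ∀ i, 1 ≤ i → i ≤ n + 1 → y i = y' i) :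
    Wn x y (n + 1) = Wn x' y' (n + 1) := by
  rw [Wn, Wn]
  apply Finset.sum_congr rfl
  intro c _
  have hlast : c.blocks.getLast?.getD 0 = c.blocks.getLast (blocks_ne_nil' c) := by
    rw [List.getLast?_eq_getLast (blocks_ne_nil' c)]
    rfl
  rw [hlast, hy _ (one_le_getLast c) (getLast_le c),
    adFold_congr (fun i hi => hx i (c.one_le_blocks (List.dropLast_subset _ hi))
      (blocks_le c (List.dropLast_subset _ hi)))]

lemma zmul_congr {x x' y y' : ℕ → 𝔤} (n : ℕ)
    (hx : ∀ i, 1 ≤ i → i ≤ n + 1 → x i = x' i)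
    (hy : ∀ i, 1 ≤ i → i ≤ n + 1 → y i = y' i) :
    zmul x y (n + 1) = zmul x' y' (n + 1) := by
  rw [zmul, zmul, hx (n + 1) (by omega) (by omega), Wn_congr n hx hy]

/-- transport `Wn` along a bracket-preserving additive map. -/
lemma Wn_map {𝔥 : Type*} [LieRing 𝔥] (f : 𝔤 →+ 𝔥) (hf : ∀ a b, f ⁅a, b⁆ = ⁅f a, f b⁆)
    (x y : ℕ → 𝔤) (n : ℕ) :
    f (Wn x y n) = Wn (fun i => f (x i)) (fun i => f (y i)) n := by
  rw [Wn, map_sum, Wn]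
  apply Finset.sum_congr rfl
  intro c _
  rw [AddMonoidHom.map_nsmul, adFold_map f hf]

lemma zmul_map {𝔥 : Type*} [LieRing 𝔥] (f : 𝔤 →+ 𝔥) (hf : ∀ a b, f ⁅a, b⁆ = ⁅f a, f b⁆)
    (x y : ℕ → 𝔤) (n : ℕ) :
    f (zmul x y n) = zmul (fun i => f (x i)) (fun i => f (y i)) n := by
  rw [zmul, zmul, map_add, Wn_map f hf]

end Main

end JetAux

lemma jetZ_eq_zmul {𝔤 : Type*} [LieRing 𝔤] (x y : ℕ → 𝔤) (n : ℕ) :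
    jetZ x y n = JetAux.zmul x y n := rfl

lemma zmul_lieHom {R : Type*} [CommRing R] {𝔤 : Type*} [LieRing 𝔤] [LieAlgebra R 𝔤]
    (f : 𝔤 →ₗ⁅R⁆ 𝔤) (x y : ℕ → 𝔤) (n : ℕ) :
    f (JetAux.zmul x y n) = JetAux.zmul (fun i => f (x i)) (fun i => f (y i)) n :=
  JetAux.zmul_map f.toLinearMap.toAddMonoidHom (fun u v => f.map_lie (x := u) (y := v)) x y n

/-- the multiplication on `G × 𝔤^k` is associative. -/
theorem stmt3 {R : Type*} [CommRing R] {𝔤 : Type*} [LieRing 𝔤] [LieAlgebra R 𝔤]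
    {G : Type*} [Group G] (k : ℕ) (hk : 1 ≤ k)
    (Ad : G → 𝔤 →ₗ⁅R⁆ 𝔤)
    (hAd1 : Ad 1 = LieHom.id)
    (hAdmul : ∀ g h : G, Ad (g * h) = (Ad g).comp (Ad h))
    (a b c : G × (Fin k → 𝔤)) :
    jetMul k Ad (jetMul k Ad a b) c = jetMul k Ad a (jetMul k Ad b c) := by
  refine Prod.ext ?_ ?_
  · show (a.1 * b.1) * c.1 = a.1 * (b.1 * c.1)
    exact mul_assoc a.1 b.1 c.1
  · show (jetMul k Ad (jetMul k Ad a b) c).2 = (jetMul k Ad a (jetMul k Ad b c)).2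
    funext j
    have hjk : j.val + 1 ≤ k := j.isLt
    show jetZ (extX k (jetMul k Ad a b).2)
        (fun i => Ad (jetMul k Ad a b).1 (extX k c.2 i)) (j.val + 1)
      = jetZ (extX k a.2)
        (fun i => Ad a.1 (extX k (jetMul k Ad b c).2 i)) (j.val + 1)
    simp only [jetMul, jetZ_eq_zmul]
    refine Eq.trans (JetAux.zmul_congr j.val ?_ ?_)
      (Eq.trans (JetAux.zmul_assoc (extX k a.2) (fun i => Ad a.1 (extX k b.2 i))
          (fun i => Ad a.1 (Ad b.1 (extX k c.2 i))) (j.val + 1))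
        (Eq.symm (JetAux.zmul_congr j.val ?_ ?_)))
    · -- extX of the (a·b)-tuple agrees with zmul on 1..j+1
      intro i h1 h2
      simp only [extX]
      rw [dif_pos ⟨h1, by omega⟩]
      rw [show i - 1 + 1 = i by omega]
    · -- Ad (a₁ * b₁) = Ad a₁ ∘ Ad b₁
      intro i _ _
      rw [hAdmul]
      rfl
    · exact fun _ _ _ => rfl
    · -- Ad a₁ applied to extX of the (b·c)-tuple
      intro i h1 h2
      have h3 : extX k (fun j' : Fin k =>
            JetAux.zmul (extX k b.2) (fun i' => Ad b.1 (extX k c.2 i')) (j'.val + 1)) i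
          = JetAux.zmul (extX k b.2) (fun i' => Ad b.1 (extX k c.2 i')) i := by
        simp only [extX]
        rw [dif_pos ⟨h1, by omega⟩]
        rw [show i - 1 + 1 = i by omega]
      rw [h3, zmul_lieHom (Ad a.1)]
end

section
/- In J_k(𝔤), for all x, y ∈ 𝔤 the product of the pure elements (x, 0, …, 0) and (y, 0, …, 0) is (x + y, ad_x y, ad_x² y, …, ad_x^{k−1} y); that is, the n-th component of the product is x + y for n = 1 and ad_x^{n−1} y for 2 ≤ n ≤ k. -/
section Defs

variable {R : Type*} [CommRing R] {𝔤 : Type*} [LieRing 𝔤] [LieAlgebra R 𝔤]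

/-- The multiplication on `J_k(𝔤) = 𝔤^k`. -/
def jMul (k : ℕ) (x y : Fin k → 𝔤) : Fin k → 𝔤 :=
  fun j => jetZ (extX k x) (extX k y) (j.val + 1)

end Defs


section Aux

variable {R : Type*} [CommRing R] {𝔤 : Type*} [LieRing 𝔤] [LieAlgebra R 𝔤]

lemma Ncoef_cons_ones : ∀ (t m : ℕ), Ncoef (m :: List.replicate t 1) = 1 := by
  intro t
  induction t with
  | zero => intro m; simp [Ncoef]
  | succ t ih =>
    intro m
    show Ncoef (m :: 1 :: List.replicate t 1) = 1
    rw [Ncoef]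
    simp [ih]

lemma foldl_lie_zero (X : ℕ → 𝔤) (l : List ℕ) :
    l.foldl (fun v i => ⁅X i, v⁆) (0 : 𝔤) = 0 := by
  induction l with
  | nil => rfl
  | cons b t ih => simpa using ih

lemma foldl_lie_eq_zero_of_mem (X : ℕ → 𝔤) :
    ∀ (l : List ℕ) (a : 𝔤) (i : ℕ), i ∈ l → X i = 0 →
      l.foldl (fun v j => ⁅X j, v⁆) a = 0 := by
  intro l
  induction l with
  | nil => simp
  | cons b t ih =>
    intro a i hi hX
    rcases List.mem_cons.mp hi with h | h
    · subst h
      rw [List.foldl_cons, hX, zero_lie]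
      exact foldl_lie_zero X t
    · exact ih _ i h hX

lemma foldl_replicate' (f : 𝔤 → ℕ → 𝔤) (b : ℕ) : ∀ (t : ℕ) (a : 𝔤),
    (List.replicate t b).foldl f a = (fun v => f v b)^[t] a := by
  intro t
  induction t with
  | zero => intro a; rfl
  | succ t ih =>
    intro a
    rw [List.replicate_succ, List.foldl_cons, ih, Function.iterate_succ_apply]

lemma extX_pure (k : ℕ) (hk : 1 ≤ k) (x : 𝔤) :
    extX k (fun j : Fin k => if j.val + 1 = 1 then x else 0)
      = fun m => if m = 1 then x else 0 := by
  funext m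
  unfold extX
  by_cases hm : 1 ≤ m ∧ m ≤ k
  · rw [dif_pos hm]
    have h1 : m - 1 + 1 = m := by omega
    simp only [h1]
  · rw [dif_neg hm, if_neg (by omega)]

end Aux

/-- the product of the pure elements `(x, 0, …, 0)` and `(y, 0, …, 0)`
in `J_k(𝔤)` is `(x + y, ad_x y, ad_x² y, …, ad_x^{k−1} y)`. -/
theorem stmt7 {R : Type*} [CommRing R] {𝔤 : Type*} [LieRing 𝔤] [LieAlgebra R 𝔤]
    (k : ℕ) (hk : 1 ≤ k) (x y : 𝔤) :
    jMul k (fun j : Fin k => if j.val + 1 = 1 then x else 0)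
           (fun j : Fin k => if j.val + 1 = 1 then y else 0)
      = fun j : Fin k =>
          if j.val + 1 = 1 then x + y else (fun v => ⁅x, v⁆)^[j.val] y := by
  funext j
  show jetZ (extX k _) (extX k _) (j.val + 1) = _
  rw [extX_pure k hk x, extX_pure k hk y]
  set n := j.val + 1 with hn
  have hn1 : 1 ≤ n := Nat.le_add_left 1 j.val
  unfold jetZ
  rw [Finset.sum_eq_single (Composition.ones n)]
  · have hrep : List.replicate n (1:ℕ) = List.replicate (n-1) 1 ++ [1] := by
      rw [← List.replicate_succ']
      congr 1
    rw [Composition.ones_blocks, hrep, List.getLast?_concat, List.dropLast_concat,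
      ← hrep]
    have hN : Ncoef (List.replicate n (1:ℕ)) = 1 := by
      have : List.replicate n (1:ℕ) = 1 :: List.replicate (n-1) 1 := by
        rw [← List.replicate_succ]; congr 1
      rw [this]; exact Ncoef_cons_ones _ _
    rw [hN, one_smul, foldl_replicate']
    simp only [Option.getD_some, if_pos rfl]
    rcases Nat.eq_or_lt_of_le hn1 with h1 | h1
    · have hj : j.val = 0 := by omega
      simp [← h1, hj]
    · have hne : ¬ (n = 1) := by omega
      have hj : n - 1 = j.val := by omega
      simp [hne, hj]
  · intro c _ hc
    obtain ⟨i, hi, h1i⟩ := Composition.ne_ones_iff.mp hc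
    have hbne : c.blocks ≠ [] := by
      intro h
      have := c.blocks_sum
      rw [h] at this
      simp at this
    have hsplit := List.dropLast_append_getLast hbne
    rw [← hsplit] at hi
    rcases List.mem_append.mp hi with h | h
    · rw [foldl_lie_eq_zero_of_mem _ _ _ i h (by simp [show i ≠ 1 by omega]), smul_zero]
    · have hieq : i = c.blocks.getLast hbne := List.mem_singleton.mp h
      have hlast : c.blocks.getLast?.getD 0 = i := by
        rw [List.getLast?_eq_getLast hbne, Option.getD_some, ← hieq]
      rw [hlast]
      have hy : (if i = 1 then y else 0) = 0 := if_neg (by omega)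
      simp only [hy]
      rw [foldl_lie_zero, smul_zero]
  · intro h
    exact absurd (Finset.mem_univ _) h
end

section
/- In J_k(𝔤), let 1 < i ≤ k and x, y ∈ 𝔤, let a ∈ 𝔤^k be the pure element with x in slot 1 and 0 elsewhere, and let b be the pure element with y in slot i and 0 elsewhere. Then the product a·b has component x in slot 1, component C(i+m−1, m)·ad_x^m y in slot i + m for each 0 ≤ m ≤ k − i (in particular y in slot i), and 0 in every other slot, where C denotes the binomial coefficient. -/
section Aux
variable {𝔤 : Type*} [LieRing 𝔤]

lemma ad_iter_zero (x : 𝔤) (m : ℕ) : (fun v => ⁅x, v⁆)^[m] (0:𝔤) = 0 :=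
  Function.iterate_fixed (lie_zero x) m

lemma foldl_ad (x : 𝔤) (M : List ℕ) (v : 𝔤) :
    M.foldl (fun w j => ⁅(if j = 1 then x else (0:𝔤)), w⁆) v
      = if ∀ j ∈ M, j = 1 then (fun w => ⁅x, w⁆)^[M.length] v else 0 := by
  induction M generalizing v with
  | nil => simp
  | cons a M ih =>
    rw [List.foldl_cons, ih]
    by_cases ha : a = 1
    · subst ha
      by_cases hM : ∀ j ∈ M, j = 1
      · simp [hM, Function.iterate_succ_apply]
      · simp [hM]
    · have hna : ¬ ∀ j ∈ a :: M, j = 1 := fun h => ha (h a List.mem_cons_self)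
      simp only [if_neg ha, zero_lie, if_neg hna]
      split
      · exact ad_iter_zero x _
      · rfl

end Aux

lemma Ncoef_rep (m s i : ℕ) :
    Ncoef (s :: (List.replicate m 1 ++ [i])) = Nat.choose (s + m + i - 1) (i - 1) := by
  induction m generalizing s with
  | zero => simp [Ncoef]
  | succ m ih =>
    rw [List.replicate_succ, List.cons_append,
      show Ncoef (s :: 1 :: (List.replicate m 1 ++ [i]))
        = Nat.choose (s + 1 - 1) (1 - 1) * Ncoef ((s + 1) :: (List.replicate m 1 ++ [i]))
        from by simp [Ncoef], ih, show s + 1 + m + i - 1 = s + (m + 1) + i - 1 by omega]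
    simp

/-- in `J_k(𝔤)`, for `1 < i ≤ k`, the product of the pure element with `x`
in slot `1` and the pure element with `y` in slot `i` has `x` in slot `1`,
`C(i+m−1, m) • ad_x^m y` in slot `i + m` for `0 ≤ m ≤ k − i`, and `0` elsewhere.
(For a slot `n = j.val + 1` with `i ≤ n`, the corresponding `m` is `n − i`,
and `C(i+m−1, m) = C(n−1, n−i)`.) -/
theorem stmt8 {R : Type*} [CommRing R] {𝔤 : Type*} [LieRing 𝔤] [LieAlgebra R 𝔤]
    (k : ℕ) (hk : 1 ≤ k) (i : ℕ) (hi : 1 < i) (hik : i ≤ k) (x y : 𝔤) :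
    jMul k (fun j : Fin k => if j.val + 1 = 1 then x else 0)
           (fun j : Fin k => if j.val + 1 = i then y else 0)
      = fun j : Fin k =>
          if j.val + 1 = 1 then x
          else if i ≤ j.val + 1 then
            Nat.choose j.val (j.val + 1 - i) • (fun v => ⁅x, v⁆)^[j.val + 1 - i] y
          else 0 := by
  funext j
  set n := j.val + 1 with hn
  have hn1 : 1 ≤ n := Nat.le_add_left 1 j.val
  have hnk : n ≤ k := j.isLt
  have hX : ∀ m : ℕ, extX k (fun j : Fin k => if j.val + 1 = 1 then x else 0) m
      = if m = 1 then x else 0 := by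
    intro m
    by_cases h : m = 1
    · subst h; simp [extX, hk]
    · simp only [extX, if_neg h]
      split
      · next hr => rw [if_neg (by omega)]
      · rfl
  have hY : ∀ m : ℕ, extX k (fun j : Fin k => if j.val + 1 = i then y else 0) m
      = if m = i then y else 0 := by
    intro m
    by_cases h : m = i
    · subst h
      simp only [extX]
      split
      · next hr => simp [show m - 1 + 1 = m from by omega]
      · next hr => exact absurd ⟨by omega, hik⟩ hr
    · simp only [extX, if_neg h]
      split
      · next hr => rw [if_neg (by omega)]
      · rfl
  show jetZ _ _ n = _
  rw [jetZ]
  have hterm : ∀ c : Composition n,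
      Ncoef c.blocks •
        (c.blocks.dropLast.foldl
          (fun v m => ⁅extX k (fun j : Fin k => if j.val + 1 = 1 then x else 0) m, v⁆)
          (extX k (fun j : Fin k => if j.val + 1 = i then y else 0)
            (c.blocks.getLast?.getD 0)))
      = Ncoef c.blocks •
        (if (∀ m ∈ c.blocks.dropLast, m = 1) ∧ c.blocks.getLast?.getD 0 = i
          then (fun w => ⁅x, w⁆)^[c.blocks.dropLast.length] y else 0) := by
    intro c
    congr 1
    have heq : (fun v m => ⁅extX k (fun j : Fin k => if j.val + 1 = 1 then x else 0) m, v⁆)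
        = fun (v : 𝔤) m => ⁅(if m = 1 then x else (0:𝔤)), v⁆ := by
      funext v m; rw [hX]
    rw [heq, hY, foldl_ad]
    by_cases h1 : ∀ m ∈ c.blocks.dropLast, m = 1
    · by_cases h2 : c.blocks.getLast?.getD 0 = i
      · rw [if_pos h1, if_pos h2, if_pos ⟨h1, h2⟩]
      · rw [if_pos h1, if_neg h2, if_neg (by tauto), ad_iter_zero]
    · rw [if_neg h1, if_neg (by tauto)]
  rw [Finset.sum_congr rfl (fun c _ => hterm c), hX]
  have hbne : ∀ c : Composition n, c.blocks ≠ [] := by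
    intro c hc
    have h2 := c.blocks_sum
    rw [hc] at h2
    simp at h2
  have hlast_le : ∀ c : Composition n, c.blocks.getLast?.getD 0 ≤ n := by
    intro c
    have hmem : c.blocks.getLast?.getD 0 ∈ c.blocks := by
      rw [List.getLast?_eq_getLast (hbne c)]
      exact List.getLast_mem _
    have h2 := List.single_le_sum (l := c.blocks) (fun x _ => Nat.zero_le x) _ hmem
    rwa [c.blocks_sum] at h2
  by_cases hin : i ≤ n
  · have hne1 : ¬ (n = 1) := by omega
    rw [if_neg hne1, if_neg hne1, if_pos hin, zero_add]
    let c0 : Composition n :=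
      ⟨List.replicate (n - i) 1 ++ [i], by
        intro a ha
        rcases List.mem_append.1 ha with h | h
        · rw [List.eq_of_mem_replicate h]; omega
        · rw [List.mem_singleton.1 h]; omega, by
        rw [List.sum_append, List.sum_replicate]; simp; omega⟩
    have hc0b : c0.blocks = List.replicate (n - i) 1 ++ [i] := rfl
    rw [Fintype.sum_eq_single c0]
    · rw [hc0b, List.dropLast_concat, List.getLast?_concat,
        if_pos ⟨fun a ha => List.eq_of_mem_replicate ha, rfl⟩, List.length_replicate]
      rcases Nat.eq_zero_or_pos (n - i) with h0 | hpos
      · rw [h0]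
        simp [Ncoef]
      · obtain ⟨m', hm'⟩ : ∃ m', n - i = m' + 1 := ⟨n - i - 1, by omega⟩
        rw [hm', List.replicate_succ, List.cons_append, Ncoef_rep,
          show (1 + m' + i - 1) = j.val by omega,
          show m' + 1 = j.val - (i - 1) by omega,
          Nat.choose_symm (show i - 1 ≤ j.val by omega)]
    · intro c hc
      by_cases h : (∀ a ∈ c.blocks.dropLast, a = 1) ∧ c.blocks.getLast?.getD 0 = i
      · exfalso
        apply hc
        apply Composition.ext
        have hconc := List.dropLast_append_getLast (hbne c)
        have hgl : c.blocks.getLast (hbne c) = i := by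
          have h2 := h.2
          rwa [List.getLast?_eq_getLast (hbne c)] at h2
        have hdl : c.blocks.dropLast = List.replicate c.blocks.dropLast.length 1 :=
          List.eq_replicate_iff.2 ⟨rfl, h.1⟩
        have hlen : c.blocks.dropLast.length = n - i := by
          have hsum := c.blocks_sum
          rw [← hconc, List.sum_append, hdl, List.sum_replicate, hgl,
            smul_eq_mul, mul_one, List.sum_singleton] at hsum
          omega
        rw [hc0b, ← hconc, hgl, hdl, hlen]
      · rw [if_neg h, smul_zero]
  · rw [Finset.sum_eq_zero, add_zero]
    · by_cases h1 : n = 1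
      · rw [if_pos h1, if_pos h1]
      · rw [if_neg h1, if_neg h1, if_neg hin]
    · intro c _
      rw [if_neg, smul_zero]
      rintro ⟨-, h2⟩
      have h3 := hlast_le c
      omega
end

section
/- For all positive integers i, j, n, the following identity of natural numbers holds: C(n·i + j − 1, j − 1) · ∏_{m=2}^{n} C(m·i − 1, i − 1) = (n·i + j − 1)! / (n! · (i!)^n · (j−1)!), where C denotes the binomial coefficient and the product is empty (equal to 1) when n = 1. Equivalently, N_{(i,…,i,j)} (with n copies of i followed by j) equals (n·i + j − 1)! / (n! · (i!)^n · (j−1)!). -/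
lemma prodA (i : ℕ) (hi : 0 < i) :
    ∀ n, 0 < n → Nat.factorial n * Nat.factorial i ^ n *
      ∏ m ∈ Finset.Icc 2 n, Nat.choose (m * i - 1) (i - 1) = Nat.factorial (n * i) := by
  intro n hn
  induction n, hn using Nat.le_induction with
  | base => simp [Nat.factorial]
  | succ n hn IH =>
    rw [Finset.prod_Icc_succ_top (by omega : 2 ≤ n + 1)]
    have hx : (n + 1) * i = n * i + i := by ring
    have h1 : i - 1 ≤ (n + 1) * i - 1 := by omega
    have hC := Nat.choose_mul_factorial_mul_factorial h1
    have h2 : (n + 1) * i - 1 - (i - 1) = n * i := by omega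
    rw [h2] at hC
    have h3 : i * Nat.factorial (i - 1) = Nat.factorial i := Nat.mul_factorial_pred hi.ne'
    have h4 : ((n + 1) * i) * Nat.factorial ((n + 1) * i - 1) = Nat.factorial ((n + 1) * i) :=
      Nat.mul_factorial_pred (by positivity)
    calc Nat.factorial (n + 1) * Nat.factorial i ^ (n + 1) *
          ((∏ m ∈ Finset.Icc 2 n, Nat.choose (m * i - 1) (i - 1)) *
            Nat.choose ((n + 1) * i - 1) (i - 1))
        = (n + 1) * Nat.factorial i *
            (Nat.factorial n * Nat.factorial i ^ n *
              ∏ m ∈ Finset.Icc 2 n, Nat.choose (m * i - 1) (i - 1)) *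
            Nat.choose ((n + 1) * i - 1) (i - 1) := by
          rw [Nat.factorial_succ]; ring
      _ = (n + 1) * Nat.factorial i * Nat.factorial (n * i) *
            Nat.choose ((n + 1) * i - 1) (i - 1) := by rw [IH]
      _ = (n + 1) * i * (Nat.choose ((n + 1) * i - 1) (i - 1) * Nat.factorial (i - 1) *
            Nat.factorial (n * i)) := by rw [← h3]; ring
      _ = (n + 1) * i * Nat.factorial ((n + 1) * i - 1) := by rw [hC]
      _ = Nat.factorial ((n + 1) * i) := by rw [← h4]

lemma ncoefL (i j : ℕ) : ∀ m k, 0 < k →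
    Ncoef (k :: List.replicate m i ++ [j]) =
      Nat.choose (k + m * i + j - 1) (j - 1) *
        ∏ t ∈ Finset.range m, Nat.choose (k + t * i + i - 1) (i - 1) := by
  intro m
  induction m with
  | zero => intro k hk; simp [Ncoef]
  | succ m IH =>
    intro k hk
    rw [List.replicate_succ]
    show Ncoef (k :: i :: (List.replicate m i ++ [j])) = _
    rw [Ncoef]
    have := IH (k + i) (by omega)
    rw [List.cons_append] at this
    rw [this, Finset.prod_range_succ']
    have e1 : k + i + m * i = k + (m + 1) * i := by ring
    rw [e1]
    have e2 : ∀ t ∈ Finset.range m, Nat.choose (k + i + t * i + i - 1) (i - 1)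
        = Nat.choose (k + (t + 1) * i + i - 1) (i - 1) := by
      intro t _; congr 1; ring_nf
    rw [Finset.prod_congr rfl e2]
    have e3 : k + 0 * i + i - 1 = k + i - 1 := by ring_nf
    rw [e3]
    ring

/-- for positive `i, j, n`,
`C(n·i+j−1, j−1) · ∏_{m=2}^{n} C(m·i−1, i−1) = (n·i+j−1)! / (n!·(i!)^n·(j−1)!)`;
equivalently `N_{(i,…,i,j)}` (with `n` copies of `i`) equals this quotient. -/
theorem stmt10 (i j n : ℕ) (hi : 0 < i) (hj : 0 < j) (hn : 0 < n) :
    (Nat.choose (n * i + j - 1) (j - 1) *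
        ∏ m ∈ Finset.Icc 2 n, Nat.choose (m * i - 1) (i - 1)
      = Nat.factorial (n * i + j - 1) /
          (Nat.factorial n * Nat.factorial i ^ n * Nat.factorial (j - 1))) ∧
    Ncoef (List.replicate n i ++ [j])
      = Nat.factorial (n * i + j - 1) /
          (Nat.factorial n * Nat.factorial i ^ n * Nat.factorial (j - 1)) := by
  have hD : 0 < Nat.factorial n * Nat.factorial i ^ n * Nat.factorial (j - 1) := by
    positivity
  have hkey : Nat.factorial (n * i + j - 1) =
      (Nat.choose (n * i + j - 1) (j - 1) *
        ∏ m ∈ Finset.Icc 2 n, Nat.choose (m * i - 1) (i - 1)) *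
      (Nat.factorial n * Nat.factorial i ^ n * Nat.factorial (j - 1)) := by
    have h1 : j - 1 ≤ n * i + j - 1 := by omega
    have hC := Nat.choose_mul_factorial_mul_factorial h1
    have h2 : n * i + j - 1 - (j - 1) = n * i := by omega
    rw [h2] at hC
    calc Nat.factorial (n * i + j - 1)
        = Nat.choose (n * i + j - 1) (j - 1) * Nat.factorial (j - 1) *
            Nat.factorial (n * i) := hC.symm
      _ = Nat.choose (n * i + j - 1) (j - 1) * Nat.factorial (j - 1) *
            (Nat.factorial n * Nat.factorial i ^ n *
              ∏ m ∈ Finset.Icc 2 n, Nat.choose (m * i - 1) (i - 1)) := by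
          rw [prodA i hi n hn]
      _ = _ := by ring
  have hfirst : Nat.choose (n * i + j - 1) (j - 1) *
        ∏ m ∈ Finset.Icc 2 n, Nat.choose (m * i - 1) (i - 1)
      = Nat.factorial (n * i + j - 1) /
          (Nat.factorial n * Nat.factorial i ^ n * Nat.factorial (j - 1)) :=
    (Nat.div_eq_of_eq_mul_left hD hkey).symm
  refine ⟨hfirst, ?_⟩
  -- Ncoef part
  obtain ⟨m, rfl⟩ : ∃ m, n = m + 1 := ⟨n - 1, by omega⟩
  rw [List.replicate_succ, List.cons_append, ← List.cons_append, ncoefL i j m i hi]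
  rw [← hfirst]
  have e1 : i + m * i = (m + 1) * i := by ring
  rw [e1]
  congr 1
  -- products equal
  rw [show Finset.Icc 2 (m + 1) = Finset.Ico 2 (m + 2) by rfl,
    Finset.prod_Ico_eq_prod_range]
  have e2 : m + 2 - 2 = m := by omega
  rw [e2]
  apply Finset.prod_congr rfl
  intro t _
  have hx : (2 + t) * i = i + t * i + i := by ring
  congr 1
  omega
end

section
/- Let k ≥ 2 and let 𝔥 = 𝔤^k with components indexed by 0, 1, …, k−1 carry the bracket [x, y]_n = Σ_{i+j=n, 0 ≤ i, j ≤ n} C(n, i)·[x_i, y_j] (this is the Lie algebra 𝔤 ⊗ R[X]/(X^k) in the divided-power basis, with x_0 playing the role of ξ). Define σ_k : 𝔥 × 𝔥 → 𝔤 by σ_k(x, y) = Σ_{i=1}^{k−1} C(k, i)·[x_i, y_{k−i}]. Then σ_k is an alternating bilinear map and is a Lie algebra 2-cocycle on 𝔥 with values in 𝔤 for the action x·v = [x_0, v]: for all x, y, z ∈ 𝔥, σ_k([x, y], z) + σ_k([y, z], x) + σ_k([z, x], y) = [x_0, σ_k(y, z)] + [y_0, σ_k(z, x)] + [z_0, σ_k(x,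 y)]. -/
section TruncLie

variable {R : Type*} [CommRing R] {𝔤 : Type*} [LieRing 𝔤] [LieAlgebra R 𝔤]

/-- Extend an element of `𝔤^k` (components indexed `0, …, k−1`) to a function on `ℕ`,
by `0` outside `{0, …, k−1}`. -/
def ext0 (k : ℕ) (x : Fin k → 𝔤) : ℕ → 𝔤 :=
  fun n => if h : n < k then x ⟨n, h⟩ else 0

/-- The bracket on `𝔥 = 𝔤^k`: `[x, y]_n = Σ_{i+j=n} C(n, i)·[x_i, y_j]`
(the Lie algebra `𝔤 ⊗ R[X]/(X^k)` in the divided-power basis). -/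
def hBr (k : ℕ) (x y : Fin k → 𝔤) : Fin k → 𝔤 :=
  fun n => ∑ i ∈ Finset.range (n.val + 1),
    Nat.choose n.val i • ⁅ext0 k x i, ext0 k y (n.val - i)⁆

/-- The 2-cocycle `σ_k(x, y) = Σ_{i=1}^{k−1} C(k, i)·[x_i, y_{k−i}]`. -/
def sigmaK (k : ℕ) (x y : Fin k → 𝔤) : 𝔤 :=
  ∑ i ∈ Finset.Ico 1 k, Nat.choose k i • ⁅ext0 k x i, ext0 k y (k - i)⁆

end TruncLie

section Helpers

variable {R : Type*} [CommRing R] {𝔤 : Type*} [LieRing 𝔤] [LieAlgebra R 𝔤]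

/-- The bracket with a fixed right argument, as an additive monoid hom. -/
private def brHom (y : 𝔤) : 𝔤 →+ 𝔤 :=
  AddMonoidHom.mk' (fun x => ⁅x, y⁆) (fun a b => add_lie a b y)

private lemma sumLie {ι : Type*} (s : Finset ι) (f : ι → 𝔤) (y : 𝔤) :
    ⁅∑ i ∈ s, f i, y⁆ = ∑ i ∈ s, ⁅f i, y⁆ :=
  map_sum (brHom y) f s

private lemma nsmulLie (n : ℕ) (x y : 𝔤) : ⁅n • x, y⁆ = n • ⁅x, y⁆ :=
  (brHom y).map_nsmul n x

private lemma jac3 (a b c : 𝔤) :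
    ⁅⁅a, b⁆, c⁆ + ⁅⁅b, c⁆, a⁆ + ⁅⁅c, a⁆, b⁆ = 0 := by
  have h := lie_jacobi a b c
  rw [← lie_skew a ⁅b,c⁆, ← lie_skew b ⁅c,a⁆, ← lie_skew c ⁅a,b⁆] at h
  linear_combination (norm := abel) -h

private lemma rotChoose {k i j : ℕ} (hj : j ≤ i) (hi : i ≤ k) :
    Nat.choose k i * Nat.choose i j = Nat.choose k (k - j) * Nat.choose (k - j) (i - j) := by
  have h1 : i - j ≤ k - j := by omega
  have h2 : k - j ≤ k := by omega
  have e1 : k - (k - j) = j := by omega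
  have e2 : (k - j) - (i - j) = k - i := by omega
  have key : ((Nat.choose k i * Nat.choose i j : ℕ) : ℚ)
      = ((Nat.choose k (k - j) * Nat.choose (k - j) (i - j) : ℕ) : ℚ) := by
    push_cast
    rw [Nat.cast_choose ℚ hi, Nat.cast_choose ℚ hj, Nat.cast_choose ℚ h2,
      Nat.cast_choose ℚ h1, e1, e2]
    have f1 : (Nat.factorial j : ℚ) ≠ 0 := by positivity
    have f2 : (Nat.factorial (i - j) : ℚ) ≠ 0 := by positivity
    have f3 : (Nat.factorial (k - i) : ℚ) ≠ 0 := by positivity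
    have f4 : (Nat.factorial i : ℚ) ≠ 0 := by positivity
    have f5 : (Nat.factorial (k - j) : ℚ) ≠ 0 := by positivity
    field_simp
  exact_mod_cast key

private lemma ext0_top (k : ℕ) (x : Fin k → 𝔤) : ext0 k x k = 0 := dif_neg (lt_irrefl k)

private lemma split_sum {k : ℕ} (hk : 1 ≤ k) {M : Type*} [AddCommMonoid M] (g : ℕ → M) :
    ∑ i ∈ Finset.range (k + 1), g i = g 0 + (∑ i ∈ Finset.Ico 1 k, g i + g k) := by
  rw [Finset.range_eq_Ico, Finset.sum_eq_sum_Ico_succ_bot (by omega : (0:ℕ) < k + 1),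
    Finset.sum_Ico_succ_top (by omega : 1 ≤ k)]

/-- Full-range form of `sigmaK`. -/
private lemma sigma_full {k : ℕ} (hk : 1 ≤ k) (x y : Fin k → 𝔤) :
    sigmaK k x y = ∑ i ∈ Finset.range (k + 1),
      Nat.choose k i • ⁅ext0 k x i, ext0 k y (k - i)⁆ := by
  rw [split_sum hk]
  simp [sigmaK, ext0_top]

/-- Key double-sum identity: `σ_k([x,y], z) + [σ_k(x,y), z_0]` is the full trinomial
double sum. -/
private lemma keyD {k : ℕ} (hk : 2 ≤ k) (x y z : Fin k → 𝔤) :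
    sigmaK k (hBr k x y) z + ⁅sigmaK k x y, ext0 k z 0⁆
      = ∑ p ∈ (Finset.range (k + 1)).sigma (fun i => Finset.range (i + 1)),
          (Nat.choose k p.1 * Nat.choose p.1 p.2) •
            ⁅⁅ext0 k x p.2, ext0 k y (p.1 - p.2)⁆, ext0 k z (k - p.1)⁆ := by
  rw [Finset.sum_sigma]
  dsimp only
  rw [split_sum (by omega : 1 ≤ k)]
  have h0 : ∑ j ∈ Finset.range (0 + 1), (Nat.choose k 0 * Nat.choose 0 j) •
      ⁅⁅ext0 k x j, ext0 k y (0 - j)⁆, ext0 k z (k - 0)⁆ = 0 := by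
    simp [ext0_top]
  have htop : ∑ j ∈ Finset.range (k + 1), (Nat.choose k k * Nat.choose k j) •
      ⁅⁅ext0 k x j, ext0 k y (k - j)⁆, ext0 k z (k - k)⁆ = ⁅sigmaK k x y, ext0 k z 0⁆ := by
    rw [sigma_full (by omega) x y, sumLie, Nat.sub_self]
    refine Finset.sum_congr rfl fun j hj => ?_
    rw [Nat.choose_self, one_mul, nsmulLie]
  have hmid : sigmaK k (hBr k x y) z
      = ∑ i ∈ Finset.Ico 1 k, ∑ j ∈ Finset.range (i + 1),
          (Nat.choose k i * Nat.choose i j) •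
            ⁅⁅ext0 k x j, ext0 k y (i - j)⁆, ext0 k z (k - i)⁆ := by
    refine Finset.sum_congr rfl fun i hi => ?_
    rw [Finset.mem_Ico] at hi
    have hik : i < k := hi.2
    have hext : ext0 k (hBr k x y) i = ∑ j ∈ Finset.range (i + 1),
        Nat.choose i j • ⁅ext0 k x j, ext0 k y (i - j)⁆ := by
      show (if h : i < k then (hBr k x y) ⟨i, h⟩ else 0) = _
      rw [dif_pos hik]
      rfl
    rw [hext, sumLie, Finset.smul_sum]
    refine Finset.sum_congr rfl fun j hj => ?_
    rw [nsmulLie, smul_smul]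
  rw [hmid, h0, htop]
  abel

/-- Reindexing for the second cyclic term. -/
private lemma reindex2 {k : ℕ} (a b c : ℕ → 𝔤) :
    ∑ p ∈ (Finset.range (k + 1)).sigma (fun i => Finset.range (i + 1)),
        (Nat.choose k p.1 * Nat.choose p.1 p.2) • ⁅⁅b p.2, c (p.1 - p.2)⁆, a (k - p.1)⁆
    = ∑ p ∈ (Finset.range (k + 1)).sigma (fun i => Finset.range (i + 1)),
        (Nat.choose k p.1 * Nat.choose p.1 p.2) • ⁅⁅b (p.1 - p.2), c (k - p.1)⁆, a p.2⁆ := by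
  refine Finset.sum_nbij' (fun p => ⟨p.2 + (k - p.1), k - p.1⟩)
    (fun q => ⟨k - q.2, q.1 - q.2⟩) ?_ ?_ ?_ ?_ ?_
  · rintro ⟨u, v⟩ h
    simp only [Finset.mem_sigma, Finset.mem_range] at h
    dsimp only
    simp only [Finset.mem_sigma, Finset.mem_range]
    omega
  · rintro ⟨i, j⟩ h
    simp only [Finset.mem_sigma, Finset.mem_range] at h
    dsimp only
    simp only [Finset.mem_sigma, Finset.mem_range]
    omega
  · rintro ⟨u, v⟩ h
    simp only [Finset.mem_sigma, Finset.mem_range] at h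
    dsimp only
    rw [show k - (k - u) = u from by omega, show v + (k - u) - (k - u) = v from by omega]
  · rintro ⟨i, j⟩ h
    simp only [Finset.mem_sigma, Finset.mem_range] at h
    dsimp only
    rw [show i - j + (k - (k - j)) = i from by omega, show k - (k - j) = j from by omega]
  · rintro ⟨u, v⟩ h
    simp only [Finset.mem_sigma, Finset.mem_range] at h
    dsimp only
    have hco : Nat.choose k u * Nat.choose u v
        = Nat.choose k (v + (k - u)) * Nat.choose (v + (k - u)) (k - u) := by
      have h' := rotChoose (i := v + (k - u)) (j := k - u) (k := k) (by omega) (by omega)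
      rw [h', show k - (k - u) = u from by omega,
        show (v + (k - u)) - (k - u) = v from by omega]
    rw [show (v + (k - u)) - (k - u) = v from by omega,
      show k - (v + (k - u)) = u - v from by omega, hco]

/-- Reindexing for the third cyclic term. -/
private lemma reindex3 {k : ℕ} (a b c : ℕ → 𝔤) :
    ∑ p ∈ (Finset.range (k + 1)).sigma (fun i => Finset.range (i + 1)),
        (Nat.choose k p.1 * Nat.choose p.1 p.2) • ⁅⁅c p.2, a (p.1 - p.2)⁆, b (k - p.1)⁆
    = ∑ p ∈ (Finset.range (k + 1)).sigma (fun i => Finset.range (i + 1)),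
        (Nat.choose k p.1 * Nat.choose p.1 p.2) • ⁅⁅c (k - p.1), a p.2⁆, b (p.1 - p.2)⁆ := by
  refine Finset.sum_nbij' (fun p => ⟨k - p.2, p.1 - p.2⟩)
    (fun q => ⟨q.2 + (k - q.1), k - q.1⟩) ?_ ?_ ?_ ?_ ?_
  · rintro ⟨u, v⟩ h
    simp only [Finset.mem_sigma, Finset.mem_range] at h
    dsimp only
    simp only [Finset.mem_sigma, Finset.mem_range]
    omega
  · rintro ⟨i, j⟩ h
    simp only [Finset.mem_sigma, Finset.mem_range] at h
    dsimp only
    simp only [Finset.mem_sigma, Finset.mem_range]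
    omega
  · rintro ⟨u, v⟩ h
    simp only [Finset.mem_sigma, Finset.mem_range] at h
    dsimp only
    rw [show u - v + (k - (k - v)) = u from by omega, show k - (k - v) = v from by omega]
  · rintro ⟨i, j⟩ h
    simp only [Finset.mem_sigma, Finset.mem_range] at h
    dsimp only
    rw [show k - (k - i) = i from by omega, show j + (k - i) - (k - i) = j from by omega]
  · rintro ⟨u, v⟩ h
    simp only [Finset.mem_sigma, Finset.mem_range] at h
    dsimp only
    have hco : Nat.choose k u * Nat.choose u v
        = Nat.choose k (k - v) * Nat.choose (k - v) (u - v) :=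
      rotChoose (by omega) (by omega)
    rw [show k - (k - v) = v from by omega, show k - v - (u - v) = k - u from by omega, hco]

end Helpers

/-- `σ_k` is an alternating bilinear map, and a Lie algebra 2-cocycle on
`𝔥 = 𝔤^k` (with the bracket `[x,y]_n = Σ_{i+j=n} C(n,i)·[x_i,y_j]`) with values in `𝔤`
for the action `x·v = [x_0, v]`. -/
theorem stmt12 {R : Type*} [CommRing R] {𝔤 : Type*} [LieRing 𝔤] [LieAlgebra R 𝔤]
    (k : ℕ) (hk : 2 ≤ k) :
    (∀ x : Fin k → 𝔤, sigmaK k x x = 0) ∧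
    (∀ (r : R) (x x' y : Fin k → 𝔤),
      sigmaK k (r • x + x') y = r • sigmaK k x y + sigmaK k x' y) ∧
    (∀ (r : R) (x y y' : Fin k → 𝔤),
      sigmaK k x (r • y + y') = r • sigmaK k x y + sigmaK k x y') ∧
    (∀ x y z : Fin k → 𝔤,
      sigmaK k (hBr k x y) z + sigmaK k (hBr k y z) x + sigmaK k (hBr k z x) y
        = ⁅ext0 k x 0, sigmaK k y z⁆ + ⁅ext0 k y 0, sigmaK k z x⁆
          + ⁅ext0 k z 0, sigmaK k x y⁆) := by
  refine ⟨?alt, ?lin1, ?lin2, ?coc⟩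
  case alt =>
    intro x
    refine Finset.sum_involution (fun i _ => k - i) ?_ ?_ ?_ ?_
    · intro i hi
      rw [Finset.mem_Ico] at hi
      rw [Nat.choose_symm (by omega : i ≤ k), show k - (k - i) = i from by omega,
        ← smul_add, ← lie_skew, neg_add_cancel, smul_zero]
    · intro i hi hne heq
      exact hne (by rw [heq, lie_self, smul_zero])
    · intro i hi
      rw [Finset.mem_Ico] at hi
      rw [Finset.mem_Ico]
      omega
    · intro i hi
      rw [Finset.mem_Ico] at hi
      omega
  case lin1 =>
    intro r x x' y
    simp only [sigmaK, Finset.smul_sum, ← Finset.sum_add_distrib]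
    refine Finset.sum_congr rfl fun i hi => ?_
    have hext : ext0 k (r • x + x') i = r • ext0 k x i + ext0 k x' i := by
      unfold ext0; split <;> simp
    rw [hext, add_lie, smul_lie, smul_add, smul_comm (Nat.choose k i) r]
  case lin2 =>
    intro r x y y'
    simp only [sigmaK, Finset.smul_sum, ← Finset.sum_add_distrib]
    refine Finset.sum_congr rfl fun i hi => ?_
    have hext : ext0 k (r • y + y') (k - i) = r • ext0 k y (k - i) + ext0 k y' (k - i) := by
      unfold ext0; split <;> simp
    rw [hext, lie_add, lie_smul, smul_add, smul_comm (Nat.choose k i) r]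
  case coc =>
    intro x y z
    have e1 := keyD hk x y z
    have e2 := keyD hk y z x
    have e3 := keyD hk z x y
    rw [reindex2 (ext0 k x) (ext0 k y) (ext0 k z)] at e2
    rw [reindex3 (ext0 k x) (ext0 k y) (ext0 k z)] at e3
    have hsum : (∑ p ∈ (Finset.range (k + 1)).sigma (fun i => Finset.range (i + 1)),
          (Nat.choose k p.1 * Nat.choose p.1 p.2) •
            ⁅⁅ext0 k x p.2, ext0 k y (p.1 - p.2)⁆, ext0 k z (k - p.1)⁆)
        + (∑ p ∈ (Finset.range (k + 1)).sigma (fun i => Finset.range (i + 1)),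
          (Nat.choose k p.1 * Nat.choose p.1 p.2) •
            ⁅⁅ext0 k y (p.1 - p.2), ext0 k z (k - p.1)⁆, ext0 k x p.2⁆)
        + (∑ p ∈ (Finset.range (k + 1)).sigma (fun i => Finset.range (i + 1)),
          (Nat.choose k p.1 * Nat.choose p.1 p.2) •
            ⁅⁅ext0 k z (k - p.1), ext0 k x p.2⁆, ext0 k y (p.1 - p.2)⁆) = 0 := by
      rw [← Finset.sum_add_distrib, ← Finset.sum_add_distrib]
      refine Finset.sum_eq_zero fun p hp => ?_
      rw [← smul_add, ← smul_add, jac3, smul_zero]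
    have s1 := lie_skew (ext0 k x 0) (sigmaK k y z)
    have s2 := lie_skew (ext0 k y 0) (sigmaK k z x)
    have s3 := lie_skew (ext0 k z 0) (sigmaK k x y)
    linear_combination (norm := abel) e1 + e2 + e3 + hsum + s1 + s2 + s3
end

section
/- Let k ≥ 2. In the group J_k(𝔤): (a) for every v ∈ 𝔤 the element (0, …, 0, v) (v in slot k, zero elsewhere) is central, i.e. commutes with every element of 𝔤^k, and v ↦ (0, …, 0, v) is an injective group homomorphism from the additive group (𝔤, +) into J_k(𝔤); (b) the projection (x_1, …, x_k) ↦ (x_1, …, x_{k−1}) is a surjective group homomorphism from J_k(𝔤) onto J_{k−1}(𝔤) whose kernel is exactly {(0, …, 0, v) : v ∈ 𝔤}. Hence J_k(𝔤) is a central extension of J_{k−1}(𝔤) by (𝔤, +). -/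
section CenterExt

variable {R : Type*} [CommRing R] {𝔤 : Type*} [LieRing 𝔤] [LieAlgebra R 𝔤]

/-- The element `(0, …, 0, v)` of `J_k(𝔤)` (`v` in slot `k`, zero elsewhere). -/
def jDelta (k : ℕ) (v : 𝔤) : Fin k → 𝔤 :=
  fun j => if j.val + 1 = k then v else 0

/-- The projection `J_k(𝔤) → J_{k−1}(𝔤)`, `(x_1, …, x_k) ↦ (x_1, …, x_{k−1})`. -/
def jProj (k : ℕ) (x : Fin k → 𝔤) : Fin (k - 1) → 𝔤 :=
  fun j => x (Fin.castLE (Nat.sub_le k 1) j)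

end CenterExt

section Aux
variable {R : Type*} [CommRing R] {𝔤 : Type*} [LieRing 𝔤] [LieAlgebra R 𝔤]

lemma Ncoef_single (n : ℕ) : Ncoef [n] = 1 := by simp [Ncoef]

lemma foldl_bracket_zero (x : ℕ → 𝔤) (l : List ℕ) :
    l.foldl (fun v i => ⁅x i, v⁆) (0 : 𝔤) = 0 := by
  induction l with
  | nil => rfl
  | cons a t ih => simpa using ih

lemma foldl_bracket_congr (x x' : ℕ → 𝔤) (l : List ℕ) (v : 𝔤)
    (h : ∀ i ∈ l, x i = x' i) :
    l.foldl (fun v i => ⁅x i, v⁆) v = l.foldl (fun v i => ⁅x' i, v⁆) v := by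
  induction l generalizing v with
  | nil => rfl
  | cons a t ih =>
      simp only [List.foldl_cons]
      rw [h a List.mem_cons_self]
      exact ih _ (fun i hi => h i (List.mem_cons_of_mem _ hi))

/-- `extX` of a delta tuple is the delta function at `k`. -/
lemma extX_jDelta (k : ℕ) (hk : 1 ≤ k) (v : 𝔤) :
    extX k (jDelta k v) = fun m => if m = k then v else 0 := by
  funext m
  unfold extX jDelta
  by_cases h : 1 ≤ m ∧ m ≤ k
  · rw [dif_pos h, Nat.sub_add_cancel h.1]
  · rw [dif_neg h, if_neg (by omega)]

lemma jetZ_delta_right (x : ℕ → 𝔤) (v : 𝔤) (k n : ℕ) (h1 : 1 ≤ n) (h2 : n ≤ k) :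
    jetZ x (fun m => if m = k then v else 0) n = x n + (if n = k then v else 0) := by
  unfold jetZ
  congr 1
  rw [Fintype.sum_eq_single (Composition.single n h1)]
  · simp [Composition.single_blocks, Ncoef_single]; congr
  · intro c hc
    obtain ⟨l, a, hla⟩ := (List.eq_nil_or_concat c.blocks).resolve_left (by
      intro h
      have := c.blocks_sum
      rw [h] at this
      simp at this
      omega)
    rw [List.concat_eq_append] at hla
    have hsum : l.sum + a = n := by
      have := c.blocks_sum
      rw [hla] at this
      simpa using this
    rw [hla, List.dropLast_concat, List.getLast?_concat]
    simp only [Option.getD_some]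
    by_cases ha : a = k
    · -- then l must be empty whence c is the single composition, contradiction
      exfalso
      have hl : l = [] := by
        rcases l with _ | ⟨b, t⟩
        · rfl
        · exfalso
          have hb : 0 < b := c.blocks_pos (by rw [hla]; simp)
          have : (b :: t).sum = b + t.sum := by simp
          omega
      apply hc
      apply Composition.ext
      rw [hla, hl, Composition.single_blocks]
      have : a = n := by omega
      rw [this, List.nil_append]
    · rw [if_neg ha, foldl_bracket_zero]
      simp

lemma jetZ_delta_left (v : 𝔤) (y : ℕ → 𝔤) (k n : ℕ) (h1 : 1 ≤ n) (h2 : n ≤ k) :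
    jetZ (fun m => if m = k then v else 0) y n = (if n = k then v else 0) + y n := by
  unfold jetZ
  congr 1
  rw [Fintype.sum_eq_single (Composition.single n h1)]
  · simp [Composition.single_blocks, Ncoef_single]
  · intro c hc
    obtain ⟨l, a, hla⟩ := (List.eq_nil_or_concat c.blocks).resolve_left (by
      intro h
      have := c.blocks_sum
      rw [h] at this
      simp at this
      omega)
    rw [List.concat_eq_append] at hla
    have hsum : l.sum + a = n := by
      have := c.blocks_sum
      rw [hla] at this
      simpa using this
    have ha0 : 0 < a := c.blocks_pos (by rw [hla]; simp)
    rw [hla, List.dropLast_concat, List.getLast?_concat]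
    simp only [Option.getD_some]
    rcases l with _ | ⟨b, t⟩
    · exfalso
      apply hc
      apply Composition.ext
      rw [hla, Composition.single_blocks]
      have : a = n := by simp at hsum; omega
      rw [this, List.nil_append]
    · have hb : 0 < b := c.blocks_pos (by rw [hla]; simp)
      have hbsum : (b :: t).sum = b + t.sum := by simp
      have hbk : b ≠ k := by omega
      simp only [List.foldl_cons, if_neg hbk, zero_lie, foldl_bracket_zero, smul_zero]

lemma jetZ_congr (x x' y y' : ℕ → 𝔤) (n : ℕ) (hn : 1 ≤ n)
    (hx : ∀ m, 1 ≤ m → m ≤ n → x m = x' m)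
    (hy : ∀ m, 1 ≤ m → m ≤ n → y m = y' m) :
    jetZ x y n = jetZ x' y' n := by
  unfold jetZ
  congr 1
  · exact hx n hn le_rfl
  · apply Finset.sum_congr rfl
    intro c _
    have hbs := c.blocks_sum
    have hmem : ∀ i ∈ c.blocks, 1 ≤ i ∧ i ≤ n := by
      intro i hi
      refine ⟨c.one_le_blocks hi, ?_⟩
      have := List.single_le_sum (l := c.blocks) (fun x _ => Nat.zero_le x) i hi
      omega
    have hne : c.blocks ≠ [] := by
      intro h
      have := c.blocks_sum
      rw [h] at this
      simp at this
      omega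
    have hlast : c.blocks.getLast?.getD 0 ∈ c.blocks := by
      rw [List.getLast?_eq_getLast hne]
      exact List.getLast_mem hne
    congr 1
    rw [foldl_bracket_congr x x' _ _ (fun i hi => by
      have := hmem i (List.dropLast_subset _ hi); exact hx i this.1 this.2)]
    congr 1
    have := hmem _ hlast
    exact hy _ this.1 this.2

end Aux

/-- for `k ≥ 2`, (a) each `(0, …, 0, v)` is central in `J_k(𝔤)` and
`v ↦ (0, …, 0, v)` is an injective group homomorphism from `(𝔤, +)` into `J_k(𝔤)`;
(b) the projection `(x_1, …, x_k) ↦ (x_1, …, x_{k−1})` is a surjective group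
homomorphism `J_k(𝔤) → J_{k−1}(𝔤)` with kernel exactly `{(0, …, 0, v) : v ∈ 𝔤}`.
Hence `J_k(𝔤)` is a central extension of `J_{k−1}(𝔤)` by `(𝔤, +)`. -/
theorem stmt15 {R : Type*} [CommRing R] {𝔤 : Type*} [LieRing 𝔤] [LieAlgebra R 𝔤]
    (k : ℕ) (hk : 2 ≤ k) :
    (∀ (v : 𝔤) (x : Fin k → 𝔤), jMul k x (jDelta k v) = jMul k (jDelta k v) x) ∧
    (∀ v w : 𝔤, jDelta k (v + w) = jMul k (jDelta k v) (jDelta k w)) ∧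
    Function.Injective (jDelta (𝔤 := 𝔤) k) ∧
    (∀ x y : Fin k → 𝔤, jProj k (jMul k x y) = jMul (k - 1) (jProj k x) (jProj k y)) ∧
    Function.Surjective (jProj (𝔤 := 𝔤) k) ∧
    (∀ x : Fin k → 𝔤, jProj k x = 0 ↔ ∃ v : 𝔤, x = jDelta k v) := by
  have hk1 : 1 ≤ k := by omega
  refine ⟨?_, ?_, ?_, ?_, ?_, ?_⟩
  · -- centrality
    intro v x
    funext j
    have hj1 : 1 ≤ j.val + 1 := by omega
    have hj2 : j.val + 1 ≤ k := by omega
    unfold jMul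
    rw [extX_jDelta k hk1 v, jetZ_delta_right _ _ _ _ hj1 hj2,
      jetZ_delta_left _ _ _ _ hj1 hj2, add_comm]
  · -- additivity
    intro v w
    funext j
    have hj1 : 1 ≤ j.val + 1 := by omega
    have hj2 : j.val + 1 ≤ k := by omega
    unfold jMul
    rw [extX_jDelta k hk1 w, jetZ_delta_right _ _ _ _ hj1 hj2]
    rw [show extX k (jDelta k v) (j.val + 1) = if j.val + 1 = k then v else 0 by
      rw [extX_jDelta k hk1 v]]
    unfold jDelta
    by_cases h : j.val + 1 = k <;> simp [h]
  · -- injectivity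
    intro v w h
    have := congrFun h ⟨k - 1, by omega⟩
    unfold jDelta at this
    simpa [show k - 1 + 1 = k by omega] using this
  · -- projection is a homomorphism
    intro x y
    funext j
    have hj : j.val < k - 1 := j.isLt
    have hj2 : j.val + 1 ≤ k - 1 := by omega
    unfold jMul jProj
    simp only [Fin.coe_castLE]
    apply jetZ_congr _ _ _ _ _ (by omega)
    all_goals
      intro m h1 h2
      simp only [extX, jProj]
      rw [dif_pos (show 1 ≤ m ∧ m ≤ k by omega), dif_pos (show 1 ≤ m ∧ m ≤ k - 1 by omega)]
      rfl
  · -- surjectivity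
    intro y
    refine ⟨fun j => if h : j.val < k - 1 then y ⟨j.val, h⟩ else 0, ?_⟩
    funext j
    unfold jProj
    simp only [Fin.coe_castLE]
    rw [dif_pos j.isLt]
  · -- kernel
    intro x
    constructor
    · intro h
      refine ⟨x ⟨k - 1, by omega⟩, ?_⟩
      funext j
      unfold jDelta
      by_cases hj : j.val + 1 = k
      · rw [if_pos hj]
        congr 1
        exact Fin.ext (show j.val = k - 1 by omega)
      · rw [if_neg hj]
        have hj' : j.val < k - 1 := by omega
        have := congrFun h ⟨j.val, hj'⟩
        unfold jProj at this
        simpa using this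
    · rintro ⟨v, rfl⟩
      funext j
      have hne : (j : ℕ) + 1 ≠ k := by have := j.isLt; omega
      simp [jProj, jDelta, hne]
end
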